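/- arXiv:1306.6362 — 5 statements merged into one kernel-verified Lean document; each statement's English description precedes it below -/
import Mathlib

section
/- Let P ∈ ℂ[x_1, …, x_n] be a polynomial such that every zero (x_1, …, x_n) ∈ ℂ^n of P satisfies x_1 ⋯ x_n = 0. Then P is a monomial: P = c·x_1^{d_1} ⋯ x_n^{d_n} for some nonzero c ∈ ℂ and nonnegative integers d_1, …, d_n. -/
open MvPolynomial

noncomputable def sub0 {σ : Type*} {R : Type*} [CommRing R] (i : σ) [DecidableEq σ] :
    MvPolynomial σ R →ₐ[R] MvPolynomial σ R :=
  aeval (fun j => if j = i then 0 else X j)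

lemma X_dvd_sub_sub0 {σ : Type*} {R : Type*} [CommRing R] [DecidableEq σ] (i : σ)
    (p : MvPolynomial σ R) : (X i : MvPolynomial σ R) ∣ p - sub0 i p := by
  induction p using MvPolynomial.induction_on with
  | C a => simp [sub0, aeval_C, algebraMap_eq]
  | add p q hp hq =>
    have : p + q - sub0 i (p + q) = (p - sub0 i p) + (q - sub0 i q) := by
      rw [map_add]; ring
    rw [this]; exact dvd_add hp hq
  | mul_X p j hp =>
    rw [map_mul]
    have hXj : sub0 i (X j) = if j = i then (0 : MvPolynomial σ R) else X j := by
      simp only [sub0, aeval_X]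
    by_cases hj : j = i
    · subst hj
      rw [hXj, if_pos rfl, mul_zero, sub_zero]
      exact Dvd.intro_left p rfl
    · rw [hXj, if_neg hj]
      have : p * X j - sub0 i p * X j = (p - sub0 i p) * X j := by ring
      rw [this]
      exact Dvd.dvd.mul_right hp _

lemma X_dvd_iff_sub0 {σ : Type*} {R : Type*} [CommRing R] [DecidableEq σ] (i : σ)
    (p : MvPolynomial σ R) : (X i : MvPolynomial σ R) ∣ p ↔ sub0 i p = 0 := by
  constructor
  · rintro ⟨q, rfl⟩
    rw [map_mul]
    have : sub0 i (X i : MvPolynomial σ R) = 0 := by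
      simp [sub0]
    rw [this, zero_mul]
  · intro h0
    have := X_dvd_sub_sub0 i p
    rwa [h0, sub_zero] at this

lemma prime_X_mv {σ : Type*} {R : Type*} [CommRing R] [IsDomain R] [DecidableEq σ] (i : σ) :
    Prime (X i : MvPolynomial σ R) := by
  refine ⟨X_ne_zero i, ?_, ?_⟩
  · intro hu
    have := hu.map (constantCoeff (σ := σ) (R := R))
    rw [constantCoeff_X] at this
    exact not_isUnit_zero this
  · intro a b hab
    rw [X_dvd_iff_sub0] at hab ⊢
    rw [X_dvd_iff_sub0 (R := R) i b]
    rw [map_mul] at hab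
    exact mul_eq_zero.mp hab

lemma isUnit_mv_eq_C : ∀ (n : ℕ) (u : MvPolynomial (Fin n) ℂ), IsUnit u → ∃ c : ℂ, u = C c := by
  intro n
  induction n with
  | zero =>
    intro u _
    obtain ⟨c, rfl⟩ := C_surjective (Fin 0) u
    exact ⟨c, rfl⟩
  | succ m ih =>
    intro u hu
    have hu' : IsUnit (finSuccEquiv ℂ m u) := hu.map _
    obtain ⟨r, hr, hCr⟩ := Polynomial.isUnit_iff.mp hu'
    obtain ⟨c, rfl⟩ := ih r hr
    refine ⟨c, ?_⟩
    have hCc : finSuccEquiv ℂ m (C c) = Polynomial.C (C c) := by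
      simp [finSuccEquiv_apply, eval₂Hom_C]
    exact (finSuccEquiv ℂ m).injective (hCr.symm.trans hCc.symm)

lemma dvd_prod_prime_pow {α : Type*} {ι : Type*} [CommMonoidWithZero α]
    [UniqueFactorizationMonoid α] [DecidableEq ι] (s : Finset ι) (p : ι → α) (k : ι → ℕ)
    (P : α) (hp : ∀ i ∈ s, Prime (p i)) (hdvd : P ∣ ∏ i ∈ s, p i ^ k i) :
    ∃ d : ι → ℕ, Associated P (∏ i ∈ s, p i ^ d i) := by
  induction s using Finset.induction_on generalizing P with
  | empty =>
    refine ⟨0, ?_⟩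
    rw [Finset.prod_empty] at hdvd ⊢
    exact associated_one_iff_isUnit.mpr (isUnit_of_dvd_one hdvd)
  | @insert a s ha ih =>
    rw [Finset.prod_insert ha] at hdvd
    obtain ⟨P1, P2, h1, h2, rfl⟩ := exists_dvd_and_dvd_of_dvd_mul hdvd
    obtain ⟨m, _, hm⟩ := (dvd_prime_pow (hp a (Finset.mem_insert_self a s)) (k a)).mp h1
    obtain ⟨d, hd⟩ := ih P2 (fun i hi => hp i (Finset.mem_insert_of_mem hi)) h2
    refine ⟨Function.update d a m, ?_⟩
    rw [Finset.prod_insert ha, Function.update_self]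
    have : ∏ i ∈ s, p i ^ Function.update d a m i = ∏ i ∈ s, p i ^ d i := by
      apply Finset.prod_congr rfl
      intro i hi
      rw [Function.update_of_ne (by rintro rfl; exact ha hi)]
    rw [this]
    exact hm.mul_mul hd

theorem stmt5 (n : ℕ) (P : MvPolynomial (Fin n) ℂ)
    (h : ∀ x : Fin n → ℂ, eval x P = 0 → ∏ i, x i = 0) :
    ∃ c : ℂ, c ≠ 0 ∧ ∃ d : Fin n → ℕ,
      P = MvPolynomial.C c * ∏ i, MvPolynomial.X i ^ d i := by
  classical
  -- the product of variables lies in the radical of (P)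
  have hrad : (∏ i, X i : MvPolynomial (Fin n) ℂ) ∈ (Ideal.span {P}).radical := by
    rw [← vanishingIdeal_zeroLocus_eq_radical (K := ℂ)]
    intro x hx
    have hPx : eval x P = 0 := hx P (Ideal.subset_span rfl)
    have := h x hPx
    rw [map_prod]
    simpa using this
  obtain ⟨k, hk⟩ := Ideal.mem_radical_iff.mp hrad
  rw [Ideal.mem_span_singleton] at hk
  rw [← Finset.prod_pow] at hk
  obtain ⟨d, hd⟩ := dvd_prod_prime_pow Finset.univ X (fun _ => k) P
    (fun i _ => prime_X_mv i) hk
  obtain ⟨u, hu⟩ := hd.symm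
  obtain ⟨c, hc⟩ := isUnit_mv_eq_C n u u.isUnit
  refine ⟨c, ?_, d, ?_⟩
  · intro hc0
    have : IsUnit (C c : MvPolynomial (Fin n) ℂ) := hc ▸ u.isUnit
    rw [hc0, map_zero] at this
    exact not_isUnit_zero this
  · rw [← hu, hc, mul_comm]
end

section
/- Let P ∈ ℂ[x_1, …, x_n] be a nonzero polynomial and y ∈ ℂ^n a zero of P. For any ε > 0 there exists δ > 0 such that any polynomial Q obtained from P by changing each nonzero coefficient of P by at most δ (in absolute value), and keeping the zero coefficients zero, has a zero z ∈ ℂ^n with |y − z| < ε. -/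
open MvPolynomial

/-- Euclidean norm on `Fin n → ℂ`. -/
noncomputable def eucNorm {n : ℕ} (v : Fin n → ℂ) : ℝ :=
  Real.sqrt (∑ i, ‖v i‖ ^ 2)

private lemma multiset_prod_norm (s : Multiset ℂ) : ‖s.prod‖ = (s.map (fun z => ‖z‖)).prod := by
  induction s using Multiset.induction with
  | empty => simp
  | cons a s ih => simp [ih]

private lemma multiset_pow_card_le_prod {c : ℝ} (hc : 0 ≤ c) (s : Multiset ℝ)
    (h : ∀ x ∈ s, c ≤ x) : c ^ Multiset.card s ≤ s.prod := by
  induction s using Multiset.induction with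
  | empty => simp
  | cons a s ih =>
    simp only [Multiset.prod_cons, Multiset.card_cons, pow_succ]
    have ha : c ≤ a := h a (Multiset.mem_cons_self a s)
    have hs : c ^ Multiset.card s ≤ s.prod := ih fun x hx => h x (Multiset.mem_cons_of_mem hx)
    calc c ^ Multiset.card s * c ≤ s.prod * a := by
          apply mul_le_mul hs ha hc
          exact le_trans (pow_nonneg hc _) hs
      _ = a * s.prod := mul_comm _ _

private lemma exists_root_norm_lt (q : Polynomial ℂ) (h0 : 0 < q.natDegree) {c : ℝ}
    (hc : 0 < c) (hlt : ‖q.eval 0‖ < c ^ q.natDegree * ‖q.leadingCoeff‖) :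
    ∃ r : ℂ, q.eval r = 0 ∧ ‖r‖ < c := by
  by_contra hcon
  push_neg at hcon
  have hq : q ≠ 0 := fun h => by simp [h] at h0
  have hsp : q.Splits := IsAlgClosed.splits q
  have hcard : Multiset.card q.roots = q.natDegree := by
    have := hsp.natDegree_eq_card_roots
    simpa using this.symm
  have hfact := hsp.eq_prod_roots
  have heval : ‖q.eval 0‖ = ‖q.leadingCoeff‖ * (q.roots.map fun r => ‖r‖).prod := by
    conv_lhs => rw [hfact]
    rw [Polynomial.eval_mul, Polynomial.eval_C, Polynomial.eval_multiset_prod, norm_mul]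
    congr 1
    rw [multiset_prod_norm, Multiset.map_map, Multiset.map_map]
    congr 1
    apply Multiset.map_congr rfl
    intro r _
    simp
  have hge : c ^ q.natDegree ≤ (q.roots.map fun r => ‖r‖).prod := by
    have := multiset_pow_card_le_prod hc.le (q.roots.map fun r => ‖r‖) ?_
    · rwa [Multiset.card_map, hcard] at this
    · intro x hx
      obtain ⟨r, hr, rfl⟩ := Multiset.mem_map.mp hx
      exact hcon r ((Polynomial.mem_roots hq).mp hr)
  have hlc : 0 < ‖q.leadingCoeff‖ := by
    rw [norm_pos_iff]
    exact Polynomial.leadingCoeff_ne_zero.mpr hq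
  rw [heval] at hlt
  nlinarith

private lemma aeval_line_eval {n : ℕ} (y v : Fin n → ℂ) (Q : MvPolynomial (Fin n) ℂ) (t : ℂ) :
    Polynomial.eval t (MvPolynomial.aeval
      (fun i => Polynomial.C (y i) + Polynomial.C (v i) * Polynomial.X) Q)
      = MvPolynomial.eval (fun i => y i + v i * t) Q := by
  induction Q using MvPolynomial.induction_on with
  | C a => simp
  | add p q hp hq => simp [hp, hq]
  | mul_X p i hp => simp [hp]

private lemma coeff_prod_top {ι : Type*} (s : Finset ι) (g : ι → Polynomial ℂ) (m : ι → ℕ)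
    (h : ∀ i ∈ s, (g i).natDegree ≤ m i) :
    (∏ i ∈ s, g i).coeff (∑ i ∈ s, m i) = ∏ i ∈ s, (g i).coeff (m i) := by
  classical
  induction s using Finset.induction_on with
  | empty => simp
  | @insert a s ha ih =>
    rw [Finset.prod_insert ha, Finset.sum_insert ha, Finset.prod_insert ha,
      Polynomial.coeff_mul_add_eq_of_natDegree_le (h a (Finset.mem_insert_self a s))
        (le_trans (Polynomial.natDegree_prod_le _ _)
          (Finset.sum_le_sum fun i hi => h i (Finset.mem_insert_of_mem hi))),
      ih fun i hi => h i (Finset.mem_insert_of_mem hi)]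

private lemma natDegree_linear_le (a b : ℂ) :
    (Polynomial.C a + Polynomial.C b * Polynomial.X).natDegree ≤ 1 := by
  compute_degree

private lemma natDegree_line_monomial_le {n : ℕ} (y v : Fin n → ℂ) (d : Fin n →₀ ℕ) (c : ℂ) :
    (MvPolynomial.aeval (fun i => Polynomial.C (y i) + Polynomial.C (v i) * Polynomial.X)
      (monomial d c)).natDegree ≤ d.degree := by
  rw [MvPolynomial.aeval_monomial, Finsupp.prod]
  refine le_trans (Polynomial.natDegree_mul_le) ?_
  have h1 : (algebraMap ℂ (Polynomial ℂ) c).natDegree = 0 := Polynomial.natDegree_C _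
  rw [h1, zero_add]
  refine le_trans (Polynomial.natDegree_prod_le _ _) ?_
  rw [Finsupp.degree]
  apply Finset.sum_le_sum
  intro i _
  refine le_trans Polynomial.natDegree_pow_le ?_
  calc d i * (Polynomial.C (y i) + Polynomial.C (v i) * Polynomial.X).natDegree
      ≤ d i * 1 := Nat.mul_le_mul_left _ (natDegree_linear_le _ _)
    _ = d i := mul_one _

private lemma coeff_linear_pow (a b : ℂ) (k : ℕ) :
    ((Polynomial.C a + Polynomial.C b * Polynomial.X) ^ k).coeff k = b ^ k := by
  have := Polynomial.coeff_pow_of_natDegree_le (p := Polynomial.C a + Polynomial.C b * Polynomial.X)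
    (n := 1) (m := k) (natDegree_linear_le a b)
  rw [mul_one] at this
  rw [this]
  simp

private lemma coeff_line_monomial_top {n : ℕ} (y v : Fin n → ℂ) (d : Fin n →₀ ℕ) (c : ℂ) :
    (MvPolynomial.aeval (fun i => Polynomial.C (y i) + Polynomial.C (v i) * Polynomial.X)
      (monomial d c)).coeff d.degree = c * ∏ i ∈ d.support, v i ^ d i := by
  rw [MvPolynomial.aeval_monomial, Finsupp.prod]
  have halg : algebraMap ℂ (Polynomial ℂ) c = Polynomial.C c := rfl
  rw [halg, Polynomial.coeff_C_mul, Finsupp.degree_apply,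
    coeff_prod_top _ _ _ (fun i _ => le_trans Polynomial.natDegree_pow_le
      (by calc d i * (Polynomial.C (y i) + Polynomial.C (v i) * Polynomial.X).natDegree
            ≤ d i * 1 := Nat.mul_le_mul_left _ (natDegree_linear_le _ _)
          _ = d i := mul_one _))]
  congr 1
  exact Finset.prod_congr rfl fun i _ => coeff_linear_pow _ _ _

private lemma norm_eval_le {n : ℕ} (R : MvPolynomial (Fin n) ℂ) (w : Fin n → ℂ) :
    ‖MvPolynomial.eval w R‖ ≤ ∑ d ∈ R.support, ‖R.coeff d‖ * ∏ i ∈ d.support, ‖w i‖ ^ d i := by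
  rw [MvPolynomial.eval_eq]
  refine le_trans (norm_sum_le _ _) ?_
  apply Finset.sum_le_sum
  intro d _
  rw [norm_mul]
  have : ‖∏ i ∈ d.support, w i ^ d i‖ = ∏ i ∈ d.support, ‖w i‖ ^ d i := by
    rw [norm_prod]
    exact Finset.prod_congr rfl fun i _ => norm_pow _ _
  rw [this]

theorem stmt6 (n : ℕ) (P : MvPolynomial (Fin n) ℂ) (hP : P ≠ 0)
    (y : Fin n → ℂ) (hy : eval y P = 0) (ε : ℝ) (hε : 0 < ε) :
    ∃ δ : ℝ, 0 < δ ∧ ∀ Q : MvPolynomial (Fin n) ℂ,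
      Q.support = P.support →
      (∀ d, ‖Q.coeff d - P.coeff d‖ ≤ δ) →
      ∃ z : Fin n → ℂ, eval z Q = 0 ∧ eucNorm (z - y) < ε := by
  classical
  set D := P.totalDegree with hDdef
  have hdegle : ∀ d ∈ P.support, Finsupp.degree d ≤ D := fun d hd =>
    MvPolynomial.le_totalDegree hd
  have htdeq : D = P.support.sup Finsupp.degree := by
    rw [hDdef, MvPolynomial.totalDegree]; rfl
  obtain ⟨dm, hdm, hdmdeg⟩ := Finset.exists_mem_eq_sup P.support
    (MvPolynomial.support_nonempty.mpr hP) Finsupp.degree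
  have hdmD : D = Finsupp.degree dm := htdeq.trans hdmdeg
  have hD0 : 0 < D := by
    cases Nat.eq_zero_or_pos D with
    | inr h => exact h
    | inl h =>
      exfalso
      have hall := (MvPolynomial.totalDegree_eq_zero_iff (Fin n) P).mp h
      have hPC : P = C (P.coeff 0) := by
        ext d
        rcases eq_or_ne d 0 with rfl | hd
        · simp
        · rw [MvPolynomial.coeff_C, if_neg (fun h' => hd h'.symm)]
          by_contra hco
          have hds : d ∈ P.support := MvPolynomial.mem_support_iff.mpr hco
          exact hd (Finsupp.ext fun i => hall d hds i)
      rw [hPC] at hy hP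
      rw [eval_C] at hy
      rw [hy] at hP
      simp at hP
  have hH : homogeneousComponent D P ≠ 0 := by
    intro h
    have hc := coeff_homogeneousComponent (σ := Fin n) (R := ℂ) D P dm
    rw [h, if_pos hdmD.symm] at hc
    simp only [MvPolynomial.coeff_zero] at hc
    exact MvPolynomial.mem_support_iff.mp hdm hc.symm
  obtain ⟨v, hv⟩ : ∃ v : Fin n → ℂ, eval v (homogeneousComponent D P) ≠ 0 := by
    by_contra h
    push_neg at h
    exact hH (MvPolynomial.funext fun x => by rw [h x, map_zero])
  set F : Finset (Fin n →₀ ℕ) := P.support.filter (fun d => Finsupp.degree d = D) with hF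
  set L : MvPolynomial (Fin n) ℂ → ℂ :=
    (fun R => ∑ d ∈ F, R.coeff d * ∏ i ∈ d.support, v i ^ d i) with hL
  have haL : eval v (homogeneousComponent D P) = L P := by
    rw [homogeneousComponent_apply, map_sum]
    exact Finset.sum_congr rfl fun d _ => by rw [eval_monomial]; rfl
  set a := L P with ha
  have ha0 : a ≠ 0 := by rw [← haL]; exact hv
  set f : Fin n → Polynomial ℂ :=
    fun i => Polynomial.C (y i) + Polynomial.C (v i) * Polynomial.X with hf
  have hqdeg : ∀ Q : MvPolynomial (Fin n) ℂ, Q.support = P.support →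
      (MvPolynomial.aeval f Q).natDegree ≤ D := by
    intro Q hs
    conv_lhs => rw [Q.as_sum]
    rw [map_sum]
    apply Polynomial.natDegree_sum_le_of_forall_le
    intro d hd
    exact le_trans (natDegree_line_monomial_le y v d _) (hdegle d (hs ▸ hd))
  have hqcoeff : ∀ Q : MvPolynomial (Fin n) ℂ, Q.support = P.support →
      (MvPolynomial.aeval f Q).coeff D = L Q := by
    intro Q hs
    conv_lhs => rw [Q.as_sum]
    rw [map_sum, Polynomial.finset_sum_coeff]
    have hFsub : F ⊆ Q.support := by rw [hs]; exact Finset.filter_subset _ _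
    rw [← Finset.sum_subset hFsub ?_]
    · apply Finset.sum_congr rfl
      intro d hd
      have hdD : Finsupp.degree d = D := (Finset.mem_filter.mp hd).2
      rw [← hdD]
      exact coeff_line_monomial_top y v d _
    · intro d hd hnd
      have h1 : Finsupp.degree d ≤ D := hdegle d (hs ▸ hd)
      have h2 : Finsupp.degree d ≠ D := fun h => hnd (Finset.mem_filter.mpr ⟨hs ▸ hd, h⟩)
      apply Polynomial.coeff_eq_zero_of_natDegree_lt
      exact lt_of_le_of_lt (natDegree_line_monomial_le y v d _) (lt_of_le_of_ne h1 h2)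
  set N := eucNorm v with hN
  have hN0 : 0 ≤ N := Real.sqrt_nonneg _
  set c : ℝ := ε / (N + 1) with hc
  have hc0 : 0 < c := div_pos hε (by linarith)
  set Sy := ∑ d ∈ P.support, ∏ i ∈ d.support, ‖y i‖ ^ d i with hSy
  set Sv := ∑ d ∈ P.support, ∏ i ∈ d.support, ‖v i‖ ^ d i with hSv
  have hSy0 : 0 ≤ Sy := Finset.sum_nonneg fun d _ =>
    Finset.prod_nonneg fun i _ => pow_nonneg (norm_nonneg _) _
  have hSv0 : 0 ≤ Sv := Finset.sum_nonneg fun d _ =>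
    Finset.prod_nonneg fun i _ => pow_nonneg (norm_nonneg _) _
  have hna : 0 < ‖a‖ := norm_pos_iff.mpr ha0
  have hcD : 0 < c ^ D := pow_pos hc0 D
  have hden1 : (0:ℝ) < 2 * (Sv + 1) := by linarith
  have hden2 : (0:ℝ) < 4 * (Sy + 1) := by linarith
  refine ⟨min (‖a‖ / (2 * (Sv + 1))) (c ^ D * ‖a‖ / (4 * (Sy + 1))),
    lt_min (div_pos hna hden1) (div_pos (mul_pos hcD hna) hden2), ?_⟩
  have hd0 : (0:ℝ) < min (‖a‖ / (2 * (Sv + 1))) (c ^ D * ‖a‖ / (4 * (Sy + 1))) :=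
    lt_min (div_pos hna hden1) (div_pos (mul_pos hcD hna) hden2)
  set δ := min (‖a‖ / (2 * (Sv + 1))) (c ^ D * ‖a‖ / (4 * (Sy + 1))) with hδdef
  have hprody : ∀ d : Fin n →₀ ℕ, 0 ≤ ∏ i ∈ d.support, ‖y i‖ ^ d i :=
    fun d => Finset.prod_nonneg fun i _ => pow_nonneg (norm_nonneg _) _
  have hprodv : ∀ d : Fin n →₀ ℕ, 0 ≤ ∏ i ∈ d.support, ‖v i‖ ^ d i :=
    fun d => Finset.prod_nonneg fun i _ => pow_nonneg (norm_nonneg _) _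
  intro Q hsupp hcoeff
  have hQy : ‖eval y Q‖ ≤ δ * Sy := by
    have h1 : eval y Q = eval y (Q - P) := by rw [map_sub, hy, sub_zero]
    rw [h1]
    refine le_trans (norm_eval_le _ _) ?_
    have hsub : (Q - P).support ⊆ P.support := by
      refine le_trans (MvPolynomial.support_sub _ _ _) ?_
      rw [hsupp, Finset.union_self]
    calc ∑ d ∈ (Q - P).support, ‖(Q - P).coeff d‖ * ∏ i ∈ d.support, ‖y i‖ ^ d i
        ≤ ∑ d ∈ P.support, ‖(Q - P).coeff d‖ * ∏ i ∈ d.support, ‖y i‖ ^ d i :=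
          Finset.sum_le_sum_of_subset_of_nonneg hsub fun d _ _ => mul_nonneg (norm_nonneg _) (hprody d)
      _ ≤ ∑ d ∈ P.support, δ * ∏ i ∈ d.support, ‖y i‖ ^ d i := by
          apply Finset.sum_le_sum
          intro d _
          refine mul_le_mul_of_nonneg_right ?_ (hprody d)
          rw [MvPolynomial.coeff_sub]
          exact hcoeff d
      _ = δ * Sy := by rw [hSy, Finset.mul_sum]
  have hLd : ‖L Q - a‖ ≤ δ * Sv := by
    rw [ha, hL]
    simp only []
    have hdiff : (∑ d ∈ F, Q.coeff d * ∏ i ∈ d.support, v i ^ d i)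
        - (∑ d ∈ F, P.coeff d * ∏ i ∈ d.support, v i ^ d i)
        = ∑ d ∈ F, (Q.coeff d - P.coeff d) * ∏ i ∈ d.support, v i ^ d i := by
      rw [← Finset.sum_sub_distrib]
      exact Finset.sum_congr rfl fun d _ => (sub_mul _ _ _).symm
    rw [hdiff]
    refine le_trans (norm_sum_le _ _) ?_
    calc ∑ d ∈ F, ‖(Q.coeff d - P.coeff d) * ∏ i ∈ d.support, v i ^ d i‖
        ≤ ∑ d ∈ F, δ * ∏ i ∈ d.support, ‖v i‖ ^ d i := by
          apply Finset.sum_le_sum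
          intro d _
          rw [norm_mul]
          have hpr : ‖∏ i ∈ d.support, v i ^ d i‖ = ∏ i ∈ d.support, ‖v i‖ ^ d i := by
            rw [norm_prod]
            exact Finset.prod_congr rfl fun i _ => norm_pow _ _
          rw [hpr]
          exact mul_le_mul_of_nonneg_right (hcoeff d) (hprodv d)
      _ ≤ ∑ d ∈ P.support, δ * ∏ i ∈ d.support, ‖v i‖ ^ d i :=
          Finset.sum_le_sum_of_subset_of_nonneg (by rw [hF]; exact Finset.filter_subset _ _)
            (fun d _ _ => mul_nonneg hd0.le (hprodv d))
      _ = δ * Sv := by rw [hSv, Finset.mul_sum]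
  have hδSv : δ * Sv ≤ ‖a‖ / 2 := by
    have h1 : δ ≤ ‖a‖ / (2 * (Sv + 1)) := min_le_left _ _
    have h2 : δ * Sv ≤ (‖a‖ / (2 * (Sv + 1))) * Sv := mul_le_mul_of_nonneg_right h1 hSv0
    have h3 : (‖a‖ / (2 * (Sv + 1))) * Sv ≤ ‖a‖ / 2 := by
      rw [div_mul_eq_mul_div, div_le_div_iff₀ hden1 (by norm_num)]
      nlinarith
    linarith
  have hlcQ : ‖a‖ / 2 ≤ ‖L Q‖ := by
    have h1 := norm_sub_norm_le a (L Q)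
    rw [norm_sub_rev] at h1
    linarith
  set q := MvPolynomial.aeval f Q with hq
  have hqD : q.natDegree = D := by
    apply le_antisymm (hqdeg Q hsupp)
    apply Polynomial.le_natDegree_of_ne_zero
    rw [hqcoeff Q hsupp]
    intro h
    rw [h, norm_zero] at hlcQ
    linarith
  have hlc : q.leadingCoeff = L Q := by
    rw [Polynomial.leadingCoeff, hqD, hqcoeff Q hsupp]
  have heval0 : q.eval 0 = eval y Q := by
    have h1 := aeval_line_eval y v Q 0
    simpa using h1
  have hD0' : 0 < q.natDegree := hqD ▸ hD0
  have hlt : ‖q.eval 0‖ < c ^ q.natDegree * ‖q.leadingCoeff‖ := by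
    rw [heval0, hqD, hlc]
    have h1 : δ ≤ c ^ D * ‖a‖ / (4 * (Sy + 1)) := min_le_right _ _
    have h2 : ‖eval y Q‖ ≤ (c ^ D * ‖a‖ / (4 * (Sy + 1))) * Sy :=
      le_trans hQy (mul_le_mul_of_nonneg_right h1 hSy0)
    have h3 : (c ^ D * ‖a‖ / (4 * (Sy + 1))) * Sy < c ^ D * (‖a‖ / 2) := by
      rw [div_mul_eq_mul_div, div_lt_iff₀ hden2]
      nlinarith [mul_pos hcD hna, mul_nonneg (mul_pos hcD hna).le hSy0]
    have h4 : c ^ D * (‖a‖ / 2) ≤ c ^ D * ‖L Q‖ := mul_le_mul_of_nonneg_left hlcQ hcD.le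
    linarith
  obtain ⟨r, hr0, hrc⟩ := exists_root_norm_lt q hD0' hc0 hlt
  refine ⟨fun i => y i + v i * r, ?_, ?_⟩
  · rw [← aeval_line_eval y v Q r]
    exact hr0
  · have hzy : (fun i => y i + v i * r) - y = fun i => v i * r := by
      funext i; simp
    rw [hzy]
    have hen : eucNorm (fun i => v i * r) = ‖r‖ * N := by
      rw [hN]
      unfold eucNorm
      have h1 : ∀ i : Fin n, ‖v i * r‖ ^ 2 = ‖r‖ ^ 2 * ‖v i‖ ^ 2 := fun i => by
        rw [norm_mul]; ring
      simp_rw [h1]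
      rw [← Finset.mul_sum, Real.sqrt_mul (by positivity), Real.sqrt_sq (norm_nonneg r)]
    rw [hen]
    have h5 : ‖r‖ * N ≤ ‖r‖ * (N + 1) := mul_le_mul_of_nonneg_left (by linarith) (norm_nonneg r)
    have h6 : ‖r‖ * (N + 1) < c * (N + 1) := mul_lt_mul_of_pos_right hrc (by linarith)
    have h7 : c * (N + 1) = ε := div_mul_cancel₀ _ (by linarith)
    linarith
end

section
/- Let B = {z ∈ ℂ : |z − 1| ≤ 2/3}. There exist unique continuous functions s_1, s_2 : B → ℂ satisfying, for all z ∈ B: z = s_1(z) + s_2(z), |s_1(z)| = |s_2(z)| = 1, and Im(s_1(z)/s_2(z)) > 0. -/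
open Complex

noncomputable def lam (z : ℂ) : ℝ := Real.sqrt (1 / ‖z‖ ^ 2 - 1 / 4)

lemma normB {z : ℂ} (h : ‖z - 1‖ ≤ 2 / 3) : 1 / 3 ≤ ‖z‖ ∧ ‖z‖ ≤ 5 / 3 := by
  have h1 := norm_sub_norm_le (1 : ℂ) z
  rw [norm_sub_rev] at h1
  have h2 := norm_add_le (z - 1) (1 : ℂ)
  simp only [sub_add_cancel, norm_one] at h1 h2
  constructor <;> linarith

lemma lam_pos {z : ℂ} (h1 : 1 / 3 ≤ ‖z‖) (h2 : ‖z‖ ≤ 5 / 3) :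
    0 < 1 / ‖z‖ ^ 2 - 1 / 4 := by
  have h0 : (0:ℝ) < ‖z‖ := by linarith
  rw [lt_sub_iff_add_lt, zero_add, div_lt_div_iff₀ (by norm_num) (by exact pow_pos h0 2)]
  nlinarith

lemma lam_sq {z : ℂ} (h1 : 1 / 3 ≤ ‖z‖) (h2 : ‖z‖ ≤ 5 / 3) :
    lam z ^ 2 = 1 / ‖z‖ ^ 2 - 1 / 4 :=
  Real.sq_sqrt (le_of_lt (lam_pos h1 h2))

lemma lam_pos' {z : ℂ} (h1 : 1 / 3 ≤ ‖z‖) (h2 : ‖z‖ ≤ 5 / 3) : 0 < lam z :=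
  Real.sqrt_pos.mpr (lam_pos h1 h2)

lemma key {z a b : ℂ} (h1 : 1 / 3 ≤ ‖z‖) (h2 : ‖z‖ ≤ 5 / 3)
    (hs : z = a + b) (ha : ‖a‖ = 1) (hb : ‖b‖ = 1) (him : 0 < (a / b).im) :
    a = z * (1 / 2 + (lam z : ℂ) * Complex.I) := by
  have hz : z ≠ 0 := by intro h; rw [h] at h1; simp at h1; linarith
  have hbne : b ≠ 0 := by intro h; rw [h] at hb; simp at hb
  set u : ℂ := a / z with hu
  have hau : a = z * u := by rw [hu]; field_simp
  have hbu : b = z * (1 - u) := by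
    have : b = z - a := by rw [hs]; ring
    rw [this, hau]; ring
  have hnu : ‖u‖ = 1 / ‖z‖ := by rw [hu, norm_div, ha]
  have hzpos : (0:ℝ) < ‖z‖ := by linarith
  have hnu' : ‖1 - u‖ = 1 / ‖z‖ := by
    have h3 : ‖z * (1 - u)‖ = 1 := by rw [← hbu, hb]
    rw [norm_mul] at h3
    rw [eq_div_iff hzpos.ne', mul_comm]
    exact h3
  -- real/imag of u
  have hre : u.re = 1 / 2 := by
    have e1 : ‖u‖ ^ 2 = ‖1 - u‖ ^ 2 := by rw [hnu, hnu']
    rw [Complex.sq_norm, Complex.sq_norm] at e1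
    simp [Complex.normSq_apply, Complex.sub_re, Complex.sub_im] at e1
    nlinarith [e1]
  have him2 : u.im ^ 2 = 1 / ‖z‖ ^ 2 - 1 / 4 := by
    have e2 : Complex.normSq u = 1 / ‖z‖ ^ 2 := by
      rw [← Complex.sq_norm, hnu]; ring
    rw [Complex.normSq_apply] at e2
    nlinarith [e2, hre]
  have huim : 0 < u.im := by
    have hab : a / b = u / (1 - u) := by
      rw [hau, hbu, mul_div_mul_left _ _ hz]
    rw [hab] at him
    have hN : 0 < Complex.normSq (1 - u) := by
      refine Complex.normSq_pos.mpr ?_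
      intro h; rw [h, mul_zero] at hbu; exact hbne hbu
    rw [Complex.div_im] at him
    simp only [Complex.sub_re, Complex.sub_im, Complex.one_re, Complex.one_im, hre] at him
    rw [div_sub_div_same, lt_div_iff₀ hN, zero_mul] at him
    nlinarith [him]
  have hlam : lam z = u.im := by
    rw [lam, ← him2, Real.sqrt_sq (le_of_lt huim)]
  rw [hau]
  congr 1
  apply Complex.ext <;> simp [hre, hlam]

noncomputable def S1 : {z : ℂ // ‖z - 1‖ ≤ 2 / 3} → ℂ :=
  fun z => (z : ℂ) * (1 / 2 + (lam (z : ℂ) : ℂ) * Complex.I)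

noncomputable def S2 : {z : ℂ // ‖z - 1‖ ≤ 2 / 3} → ℂ :=
  fun z => (z : ℂ) * (1 / 2 - (lam (z : ℂ) : ℂ) * Complex.I)

theorem stmt7 :
    ∃! p : ({z : ℂ // ‖z - 1‖ ≤ 2 / 3} → ℂ) × ({z : ℂ // ‖z - 1‖ ≤ 2 / 3} → ℂ),
      Continuous p.1 ∧ Continuous p.2 ∧
      ∀ z : {z : ℂ // ‖z - 1‖ ≤ 2 / 3},
        (z : ℂ) = p.1 z + p.2 z ∧ ‖p.1 z‖ = 1 ∧ ‖p.2 z‖ = 1 ∧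
        0 < (p.1 z / p.2 z).im := by
  have hcontlam : Continuous fun z : {z : ℂ // ‖z - 1‖ ≤ 2 / 3} => lam (z : ℂ) := by
    unfold lam
    apply Real.continuous_sqrt.comp
    apply Continuous.sub
    · apply Continuous.div continuous_const
      · exact (continuous_subtype_val.norm).pow 2
      · intro z
        have := (normB z.2).1
        positivity
    · exact continuous_const
  have hc1 : Continuous S1 := by
    unfold S1
    exact continuous_subtype_val.mul
      (continuous_const.add ((Complex.continuous_ofReal.comp hcontlam).mul continuous_const))
  have hc2 : Continuous S2 := by
    unfold S2
    exact continuous_subtype_val.mul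
      (continuous_const.sub ((Complex.continuous_ofReal.comp hcontlam).mul continuous_const))
  have hprop : ∀ z : {z : ℂ // ‖z - 1‖ ≤ 2 / 3},
      (z : ℂ) = S1 z + S2 z ∧ ‖S1 z‖ = 1 ∧ ‖S2 z‖ = 1 ∧ 0 < (S1 z / S2 z).im := by
    intro z
    obtain ⟨hz1, hz2⟩ := normB z.2
    have hzpos : (0:ℝ) < ‖(z : ℂ)‖ := by linarith
    have hzne : (z : ℂ) ≠ 0 := by simpa using hzpos.ne'
    have hl := lam_sq hz1 hz2
    have hlp := lam_pos' hz1 hz2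
    have hw : ∀ s : ℝ, ‖(1 / 2 + (s : ℂ) * Complex.I)‖ ^ 2 = 1/4 + s^2 := by
      intro s
      rw [Complex.sq_norm]
      simp [Complex.normSq_apply]
      ring
    have hw1 : ‖S1 z‖ = 1 := by
      unfold S1
      rw [norm_mul]
      have h := hw (lam (z : ℂ))
      have : ‖(1 / 2 + ((lam (z:ℂ)) : ℂ) * Complex.I)‖ = 1 / ‖(z:ℂ)‖ := by
        rw [← sq_eq_sq₀ (norm_nonneg _) (by positivity), h, hl]
        field_simp
        ring
      rw [this]
      rw [mul_one_div]
      exact div_self hzpos.ne'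
    have hw2 : ‖S2 z‖ = 1 := by
      unfold S2
      rw [norm_mul]
      have h : ‖(1 / 2 - ((lam (z:ℂ)) : ℂ) * Complex.I)‖ ^ 2 = 1/4 + (lam (z:ℂ))^2 := by
        rw [Complex.sq_norm]
        simp [Complex.normSq_apply]
        ring
      have : ‖(1 / 2 - ((lam (z:ℂ)) : ℂ) * Complex.I)‖ = 1 / ‖(z:ℂ)‖ := by
        rw [← sq_eq_sq₀ (norm_nonneg _) (by positivity), h, hl]
        field_simp
        ring
      rw [this]
      rw [mul_one_div]
      exact div_self hzpos.ne'
    refine ⟨by unfold S1 S2; ring, hw1, hw2, ?_⟩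
    have hne2 : S2 z ≠ 0 := by intro h; rw [h] at hw2; simp at hw2
    have hdiv : S1 z / S2 z =
        (1 / 2 + ((lam (z:ℂ)) : ℂ) * Complex.I) / (1 / 2 - ((lam (z:ℂ)) : ℂ) * Complex.I) := by
      unfold S1 S2
      rw [mul_div_mul_left _ _ hzne]
    have hN : 0 < Complex.normSq (1 / 2 - ((lam (z:ℂ)) : ℂ) * Complex.I) := by
      refine Complex.normSq_pos.mpr ?_
      intro h
      apply hne2
      show (z:ℂ) * (1 / 2 - ((lam (z:ℂ)) : ℂ) * Complex.I) = 0
      rw [h, mul_zero]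
    rw [hdiv, Complex.div_im]
    have e1 : (1 / 2 + ((lam (z:ℂ)) : ℂ) * Complex.I).im = lam (z:ℂ) := by simp
    have e2 : (1 / 2 + ((lam (z:ℂ)) : ℂ) * Complex.I).re = 1 / 2 := by simp
    have e3 : (1 / 2 - ((lam (z:ℂ)) : ℂ) * Complex.I).im = -lam (z:ℂ) := by simp
    have e4 : (1 / 2 - ((lam (z:ℂ)) : ℂ) * Complex.I).re = 1 / 2 := by simp
    rw [e1, e2, e3, e4, div_sub_div_same]
    have e5 : lam (z:ℂ) * (1/2) - 1/2 * (-lam (z:ℂ)) = lam (z:ℂ) := by ring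
    rw [e5]
    exact div_pos hlp hN
  refine ⟨(S1, S2), ⟨hc1, hc2, hprop⟩, ?_⟩
  rintro ⟨q1, q2⟩ ⟨-, -, hq⟩
  have h1 : q1 = S1 := by
    funext z
    obtain ⟨hz1, hz2⟩ := normB z.2
    obtain ⟨hs, ha, hb, him⟩ := hq z
    exact key hz1 hz2 hs ha hb him
  have h2 : q2 = S2 := by
    funext z
    obtain ⟨hs, _, _, _⟩ := hq z
    have : q2 z = (z : ℂ) - q1 z := by rw [hs]; ring
    rw [this, h1]
    unfold S1 S2
    ring
  rw [h1, h2]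
end

section
/- Let Δ be an n×n complex matrix with Frobenius norm ‖Δ‖ < 1/(3√n), let T = {(z_1,…,z_n) ∈ ℂ^n : |z_j| = 1 for all j}, and let A = {z ∈ ℂ : |z−1| ≤ 1/3}. Then A^n ⊆ {t_1 + (I + Δ)t_2 : t_1, t_2 ∈ T}. -/
set_option maxHeartbeats 1000000

/-- Frobenius norm on `n × n` complex matrices. -/
noncomputable def fnorm {n : ℕ} (A : Matrix (Fin n) (Fin n) ℂ) : ℝ :=
  Real.sqrt (∑ i, ∑ j, ‖A i j‖ ^ 2)

noncomputable def Complex.abs : AbsoluteValue ℂ ℝ := IsAbsoluteValue.toAbsoluteValue (norm : ℂ → ℝ)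

lemma Complex.norm_eq_abs (z : ℂ) : ‖z‖ = Complex.abs z := rfl

lemma Complex.abs_apply (z : ℂ) : Complex.abs z = Real.sqrt (Complex.normSq z) := Complex.norm_def z

lemma Complex.sq_abs (z : ℂ) : Complex.abs z ^ 2 = Complex.normSq z := Complex.sq_norm z

lemma Complex.normSq_eq_abs (z : ℂ) : Complex.normSq z = Complex.abs z ^ 2 := Complex.normSq_eq_norm_sq z

@[simp]
lemma Complex.abs_ofReal (r : ℝ) : Complex.abs (r : ℂ) = |r| := Complex.norm_real r

@[simp]
lemma Complex.abs_conj (z : ℂ) : Complex.abs ((starRingEnd ℂ) z) = Complex.abs z := Complex.norm_conj z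

@[simp]
lemma Complex.abs_two : Complex.abs 2 = 2 := Complex.norm_two

lemma Complex.continuous_abs : Continuous (fun z : ℂ => Complex.abs z) := continuous_norm

lemma Complex.abs_exp_ofReal_mul_I (x : ℝ) : Complex.abs (Complex.exp (x * Complex.I)) = 1 :=
  Complex.norm_exp_ofReal_mul_I x

lemma cs_row {n : ℕ} (v u : Fin n → ℂ) :
    Complex.abs (∑ k, v k * u k) ≤
      Real.sqrt (∑ k, ‖v k‖^2) * Real.sqrt (∑ k, ‖u k‖^2) := by
  have h1 : Complex.abs (∑ k, v k * u k) ≤ ∑ k, ‖v k‖ * ‖u k‖ := by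
    refine le_trans (Complex.abs.sum_le _ _) (le_of_eq ?_)
    refine Finset.sum_congr rfl fun k _ => ?_
    rw [map_mul, Complex.norm_eq_abs, Complex.norm_eq_abs]
  have h2 := Finset.sum_mul_sq_le_sq_mul_sq Finset.univ (fun k => ‖v k‖) (fun k => ‖u k‖)
  have h3 : (0:ℝ) ≤ ∑ k, ‖v k‖ * ‖u k‖ :=
    Finset.sum_nonneg fun k _ => mul_nonneg (norm_nonneg _) (norm_nonneg _)
  calc Complex.abs (∑ k, v k * u k) ≤ ∑ k, ‖v k‖ * ‖u k‖ := h1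
    _ = Real.sqrt ((∑ k, ‖v k‖ * ‖u k‖)^2) := (Real.sqrt_sq h3).symm
    _ ≤ Real.sqrt ((∑ k, ‖v k‖^2) * (∑ k, ‖u k‖^2)) := Real.sqrt_le_sqrt h2
    _ = Real.sqrt (∑ k, ‖v k‖^2) * Real.sqrt (∑ k, ‖u k‖^2) :=
        Real.sqrt_mul (Finset.sum_nonneg fun k _ => by positivity) _

noncomputable def tt (ζ : ℂ) : ℂ :=
  ζ * (1/2 + Complex.I * ((Real.sqrt (4 - Complex.abs ζ ^ 2) / (2 * Complex.abs ζ) : ℝ) : ℂ))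

noncomputable def ee (p : ℝ) : ℂ := ((p : ℂ) + Complex.I * ((Real.sqrt (4 - p^2) : ℝ) : ℂ)) / 2

lemma tt_factor {a : ℂ} (h : a ≠ 0) : tt a = (a / ((Complex.abs a : ℝ) : ℂ)) * ee (Complex.abs a) := by
  have h0 : ((Complex.abs a : ℝ) : ℂ) ≠ 0 := by
    simp [Complex.abs.ne_zero_iff, h]
  rw [tt, ee, div_mul_eq_mul_div, eq_div_iff h0]
  push_cast
  field_simp

lemma abs_ee {p : ℝ} (h1 : 0 ≤ p) (h2 : p ≤ 5/3) : Complex.abs (ee p) = 1 := by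
  have h4 : 0 ≤ 4 - p^2 := by nlinarith
  rw [ee, map_div₀, Complex.abs_apply, Complex.normSq_apply]
  simp only [Complex.add_re, Complex.add_im, Complex.ofReal_re, Complex.ofReal_im,
    Complex.mul_re, Complex.mul_im, Complex.I_re, Complex.I_im]
  have : (p + (0 * Real.sqrt (4-p^2) - 1 * 0)) * (p + (0 * Real.sqrt (4-p^2) - 1 * 0)) +
      (0 + (0*0 + 1*Real.sqrt (4-p^2))) * (0 + (0*0 + 1*Real.sqrt (4-p^2))) = 4 := by
    have := Real.sq_sqrt h4
    nlinarith [this]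
  rw [this]
  simp
  rw [show (4:ℝ) = 2^2 by norm_num, Real.sqrt_sq (by norm_num)]
  norm_num

lemma abs_mk (x y : ℝ) : Complex.abs ((x:ℂ) + Complex.I * (y:ℂ)) = Real.sqrt (x^2 + y^2) := by
  rw [Complex.abs_apply]
  congr 1
  simp [Complex.normSq_apply]
  ring

lemma ee_diff {p q : ℝ} (hp1 : 1/3 ≤ p) (hp2 : p ≤ 5/3) (hq1 : 1/3 ≤ q) (hq2 : q ≤ 5/3) :
    Complex.abs (ee p - ee q) ≤ (3 / Real.sqrt 11) * |p - q| := by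
  set s1 := Real.sqrt (4 - p^2) with hs1
  set s2 := Real.sqrt (4 - q^2) with hs2
  have h4p : (0:ℝ) ≤ 4 - p^2 := by nlinarith
  have h4q : (0:ℝ) ≤ 4 - q^2 := by nlinarith
  have hs1sq : s1^2 = 4 - p^2 := Real.sq_sqrt h4p
  have hs2sq : s2^2 = 4 - q^2 := Real.sq_sqrt h4q
  have h11 : (Real.sqrt 11)^2 = 11 := Real.sq_sqrt (by norm_num)
  have h11pos : 0 < Real.sqrt 11 := Real.sqrt_pos.mpr (by norm_num)
  have hls1 : Real.sqrt 11 / 3 ≤ s1 := by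
    rw [hs1, Real.le_sqrt' (by positivity)]
    nlinarith [h11]
  have hls2 : Real.sqrt 11 / 3 ≤ s2 := by
    rw [hs2, Real.le_sqrt' (by positivity)]
    nlinarith [h11]
  have hprod : (s1 - s2) * (s1 + s2) = q^2 - p^2 := by nlinarith [hs1sq, hs2sq]
  have hsum : 2 * Real.sqrt 11 / 3 ≤ s1 + s2 := by linarith
  have h44 : (44:ℝ)/9 ≤ (s1+s2)^2 := by nlinarith [h11, h11pos.le]
  have e1 : (s1-s2)^2 * (44/9) ≤ (s1-s2)^2 * (s1+s2)^2 :=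
    mul_le_mul_of_nonneg_left h44 (sq_nonneg _)
  have e2 : (s1-s2)^2*(s1+s2)^2 = (q^2-p^2)^2 := by
    linear_combination ((s1-s2)*(s1+s2) + (q^2-p^2)) * hprod
  have hpq10 : p + q ≤ 10/3 := by linarith
  have hpq0 : (0:ℝ) ≤ p + q := by linarith
  have h9 : (p+q)^2 ≤ 100/9 := by nlinarith [mul_le_mul hpq10 hpq10 hpq0 (by norm_num : (0:ℝ) ≤ 10/3)]
  have e3 : (q^2-p^2)^2 ≤ (100/9)*(p-q)^2 := by
    nlinarith [mul_nonneg (sq_nonneg (p-q)) (by linarith : (0:ℝ) ≤ 100/9 - (p+q)^2)]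
  have hdiffsq : (s1 - s2)^2 ≤ (25/11) * (p - q)^2 := by linarith
  have hee : ee p - ee q = (((p-q : ℝ):ℂ) + Complex.I * ((s1 - s2 : ℝ):ℂ))/2 := by
    rw [ee, ee]
    push_cast
    ring
  rw [hee, map_div₀, abs_mk]
  have h2abs : Complex.abs 2 = 2 := by norm_num
  rw [h2abs]
  have hB : (0:ℝ) ≤ 2*((3/Real.sqrt 11) * |p - q|) := by positivity
  have hA : (p-q)^2 + (s1-s2)^2 ≤ (2*((3/Real.sqrt 11) * |p - q|))^2 := by
    have hexp : (2*((3/Real.sqrt 11) * |p - q|))^2 = 36/11 * (p-q)^2 := by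
      rw [mul_pow, mul_pow, div_pow, h11, sq_abs]
      ring
    rw [hexp]
    linarith [hdiffsq]
  have := Real.sqrt_le_sqrt hA
  rw [Real.sqrt_sq hB] at this
  linarith

lemma key2 (p q t d2 : ℝ) (hp : 0 ≤ p) (hq : 0 ≤ q) (ht : -(p*q) ≤ t)
    (hd : p^2 + q^2 - 2*t ≤ d2) :
    (2*p^2*q^2 - 2*p*q*t) * (p+q)^2 ≤ 4 * (p^2*q^2) * d2 := by
  nlinarith [mul_nonneg (mul_nonneg (by positivity : (0:ℝ) ≤ 2*p*q) (sq_nonneg (p-q))) (by linarith : 0 ≤ p*q + t),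
    mul_nonneg (mul_nonneg hp hq) (sq_nonneg (p+q)), sq_nonneg (p*q), mul_nonneg (mul_nonneg hp hq) (by linarith : 0 ≤ p*q + t)]

lemma unit_diff (a b : ℂ) :
    Complex.abs (b * (Complex.abs a : ℂ) - a * (Complex.abs b : ℂ)) * (Complex.abs a + Complex.abs b)
      ≤ 2 * (Complex.abs a * Complex.abs b) * Complex.abs (a - b) := by
  set p := Complex.abs a with hp
  set q := Complex.abs b with hq
  have hp0 : 0 ≤ p := Complex.abs.nonneg a
  have hq0 : 0 ≤ q := Complex.abs.nonneg b
  set t : ℝ := a.re*b.re + a.im*b.im with htdef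
  have hp2 : p^2 = a.re^2 + a.im^2 := by
    rw [hp, Complex.sq_abs, Complex.normSq_apply]; ring
  have hq2 : q^2 = b.re^2 + b.im^2 := by
    rw [hq, Complex.sq_abs, Complex.normSq_apply]; ring
  have htle : -(p*q) ≤ t := by
    nlinarith [sq_nonneg (a.re*b.im - a.im*b.re), sq_nonneg (p*q + t), mul_nonneg hp0 hq0]
  have hs1 : (Complex.abs (b * (p:ℂ) - a * (q:ℂ)))^2 = 2*p^2*q^2 - 2*p*q*t := by
    rw [Complex.sq_abs, Complex.normSq_apply]
    simp only [Complex.sub_re, Complex.sub_im, Complex.mul_re, Complex.mul_im,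
      Complex.ofReal_re, Complex.ofReal_im]
    linear_combination (-(q^2))*hp2 + (-(p^2))*hq2
  have hs2 : (Complex.abs (a - b))^2 = p^2 + q^2 - 2*t := by
    rw [Complex.sq_abs, Complex.normSq_apply]
    simp only [Complex.sub_re, Complex.sub_im]
    linear_combination -hp2 - hq2
  have key := key2 p q t ((Complex.abs (a-b))^2) hp0 hq0 htle (le_of_eq hs2.symm)
  rw [← hs1] at key
  refine (pow_le_pow_iff_left₀ (by positivity) (by positivity) (by norm_num : (2:ℕ) ≠ 0)).mp ?_
  calc (Complex.abs (b * (p:ℂ) - a * (q:ℂ)) * (p + q))^2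
      = Complex.abs (b * (p:ℂ) - a * (q:ℂ))^2 * (p+q)^2 := by ring
    _ ≤ 4 * (p ^ 2 * q ^ 2) * Complex.abs (a - b) ^ 2 := key
    _ = (2 * (p * q) * Complex.abs (a - b))^2 := by ring

lemma abs_bounds {a : ℂ} (ha : Complex.abs (a - 1) ≤ 2/3) :
    1/3 ≤ Complex.abs a ∧ Complex.abs a ≤ 5/3 := by
  have h := Complex.abs.abs_abv_sub_le_abv_sub a 1
  simp only [map_one] at h
  have h2 : |Complex.abs a - 1| ≤ 2/3 := le_trans h ha
  rw [abs_le] at h2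
  constructor <;> linarith [h2.1, h2.2]

lemma tt_lip {a b : ℂ} (ha : Complex.abs (a - 1) ≤ 2/3) (hb : Complex.abs (b - 1) ≤ 2/3) :
    Complex.abs (tt a - tt b) ≤ (3 + 3/Real.sqrt 11) * Complex.abs (a - b) := by
  obtain ⟨hp1, hp2⟩ := abs_bounds ha
  obtain ⟨hq1, hq2⟩ := abs_bounds hb
  set p := Complex.abs a with hp
  set q := Complex.abs b with hq
  have hp0 : (0:ℝ) < p := by linarith
  have hq0 : (0:ℝ) < q := by linarith
  have ha0 : a ≠ 0 := by
    intro h; rw [h] at hp; simp at hp; rw [hp] at hp0; linarith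
  have hb0 : b ≠ 0 := by
    intro h; rw [h] at hq; simp at hq; rw [hq] at hq0; linarith
  have hpc : ((p:ℝ):ℂ) ≠ 0 := by
    simp only [ne_eq, Complex.ofReal_eq_zero]; linarith
  have hqc : ((q:ℝ):ℂ) ≠ 0 := by
    simp only [ne_eq, Complex.ofReal_eq_zero]; linarith
  -- decomposition
  have hdecomp : tt a - tt b = ee p * (a/((p:ℝ):ℂ) - b/((q:ℝ):ℂ)) + (b/((q:ℝ):ℂ)) * (ee p - ee q) := by
    rw [tt_factor ha0, tt_factor hb0, ← hp, ← hq]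
    ring
  -- bound on unit direction difference
  have hud : Complex.abs (a/((p:ℝ):ℂ) - b/((q:ℝ):ℂ)) ≤ 3 * Complex.abs (a - b) := by
    have hfrac : a/((p:ℝ):ℂ) - b/((q:ℝ):ℂ) = (a * ((q:ℝ):ℂ) - b * ((p:ℝ):ℂ)) / (((p:ℝ):ℂ) * ((q:ℝ):ℂ)) := by
      field_simp
    rw [hfrac, map_div₀, map_mul, Complex.abs_ofReal, Complex.abs_ofReal,
      abs_of_pos hp0, abs_of_pos hq0]
    rw [div_le_iff₀ (by positivity)]
    have h1 := unit_diff a b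
    rw [← hp, ← hq] at h1
    have h2 : Complex.abs (a * ((q:ℝ):ℂ) - b * ((p:ℝ):ℂ)) = Complex.abs (b * ((p:ℝ):ℂ) - a * ((q:ℝ):ℂ)) := by
      rw [← Complex.abs.map_neg]
      ring_nf
    rw [h2]
    have h3 : (0:ℝ) ≤ Complex.abs (b * ((p:ℝ):ℂ) - a * ((q:ℝ):ℂ)) := Complex.abs.nonneg _
    nlinarith [mul_nonneg (by linarith : (0:ℝ) ≤ p + q - 2/3) h3]
  have habsb : Complex.abs (b/((q:ℝ):ℂ)) = 1 := by
    rw [map_div₀, Complex.abs_ofReal, abs_of_pos hq0, ← hq, div_self (ne_of_gt hq0)]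
  have heep : Complex.abs (ee p) = 1 := abs_ee (by linarith) hp2
  have heed : Complex.abs (ee p - ee q) ≤ (3/Real.sqrt 11) * |p - q| := ee_diff hp1 hp2 hq1 hq2
  have hpqd : |p - q| ≤ Complex.abs (a - b) := by
    have := Complex.abs.abs_abv_sub_le_abv_sub a b
    rw [← hp, ← hq] at this
    exact this
  calc Complex.abs (tt a - tt b)
      ≤ Complex.abs (ee p * (a/((p:ℝ):ℂ) - b/((q:ℝ):ℂ))) + Complex.abs ((b/((q:ℝ):ℂ)) * (ee p - ee q)) := by
        rw [hdecomp]; exact Complex.abs.add_le _ _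
    _ = Complex.abs (ee p) * Complex.abs (a/((p:ℝ):ℂ) - b/((q:ℝ):ℂ))
        + Complex.abs (b/((q:ℝ):ℂ)) * Complex.abs (ee p - ee q) := by rw [map_mul, map_mul]
    _ ≤ 1 * (3 * Complex.abs (a-b)) + 1 * ((3/Real.sqrt 11) * |p - q|) := by
        rw [heep, habsb]
        have := Complex.abs.nonneg (ee p - ee q)
        gcongr <;> simp [hud, heed]
    _ ≤ (3 + 3/Real.sqrt 11) * Complex.abs (a - b) := by
        have h11pos : 0 < Real.sqrt 11 := Real.sqrt_pos.mpr (by norm_num)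
        have : (3/Real.sqrt 11) * |p - q| ≤ (3/Real.sqrt 11) * Complex.abs (a-b) := by
          apply mul_le_mul_of_nonneg_left hpqd (by positivity)
        nlinarith [this]

lemma abs_half_add_I_mul (c : ℝ) :
    Complex.abs (1/2 + Complex.I * (c : ℂ)) = Real.sqrt (1/4 + c^2) := by
  rw [Complex.abs_apply]
  congr 1
  simp [Complex.normSq_apply]
  ring

lemma abs_mul_half {ζ : ℂ} (c : ℝ) (h1 : 1/3 ≤ Complex.abs ζ)
    (hc : c^2 = (4 - Complex.abs ζ^2)/(4*Complex.abs ζ^2)) :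
    Complex.abs (ζ * (1/2 + Complex.I * (c:ℂ))) = 1 := by
  set r := Complex.abs ζ with hr
  have hr0 : 0 < r := by linarith
  rw [map_mul, abs_half_add_I_mul]
  have h14 : 1/4 + c^2 = (1/r)^2 := by
    rw [hc]; field_simp; ring
  rw [h14, Real.sqrt_sq (by positivity : (0:ℝ) ≤ 1/r)]
  field_simp
  rfl

lemma tt_unit {ζ : ℂ} (h1 : 1/3 ≤ Complex.abs ζ) (h2 : Complex.abs ζ ≤ 5/3) :
    Complex.abs (tt ζ) = 1 := by
  rw [tt]
  apply abs_mul_half _ h1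
  rw [div_pow, Real.sq_sqrt (by nlinarith : (0:ℝ) ≤ 4 - Complex.abs ζ^2)]
  ring

lemma tt_unit' {ζ : ℂ} (h1 : 1/3 ≤ Complex.abs ζ) (h2 : Complex.abs ζ ≤ 5/3) :
    Complex.abs (ζ - tt ζ) = 1 := by
  have h : ζ - tt ζ = ζ * (1/2 + Complex.I *
      ((-(Real.sqrt (4 - Complex.abs ζ^2) / (2*Complex.abs ζ)) : ℝ):ℂ)) := by
    rw [tt]; push_cast; ring
  rw [h]
  apply abs_mul_half _ h1
  rw [neg_pow, div_pow, Real.sq_sqrt (by nlinarith : (0:ℝ) ≤ 4 - Complex.abs ζ^2)]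
  ring

lemma one_dim (m w0 : ℂ) (hm : Complex.abs (m - 1) ≤ 1/3) (hw : Complex.abs (w0 - 1) ≤ 1/3) :
    ∃ t1 t2 : ℂ, Complex.abs t1 = 1 ∧ Complex.abs t2 = 1 ∧ w0 = t1 + m * t2 := by
  have hmb := Complex.abs.abs_abv_sub_le_abv_sub m 1
  simp only [map_one] at hmb
  have hmb2 : |Complex.abs m - 1| ≤ 1/3 := le_trans hmb hm
  rw [abs_le] at hmb2
  have hwb := Complex.abs.abs_abv_sub_le_abv_sub w0 1
  simp only [map_one] at hwb
  have hwb2 : |Complex.abs w0 - 1| ≤ 1/3 := le_trans hwb hw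
  rw [abs_le] at hwb2
  have hm1 : 2/3 ≤ Complex.abs m := by linarith [hmb2.1]
  have hm2 : Complex.abs m ≤ 4/3 := by linarith [hmb2.2]
  have hw1 : 2/3 ≤ Complex.abs w0 := by linarith [hwb2.1]
  have hw2 : Complex.abs w0 ≤ 4/3 := by linarith [hwb2.2]
  have hm0 : m ≠ 0 := by
    intro h; rw [h] at hm1; simp at hm1; linarith
  have hw0 : w0 ≠ 0 := by
    intro h; rw [h] at hw1; simp at hw1; linarith
  have hmc : ((Complex.abs m : ℝ):ℂ) ≠ 0 := by
    simp only [ne_eq, Complex.ofReal_eq_zero]; intro h; rw [h] at hm1; linarith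
  have hwc : ((Complex.abs w0 : ℝ):ℂ) ≠ 0 := by
    simp only [ne_eq, Complex.ofReal_eq_zero]; intro h; rw [h] at hw1; linarith
  set b0 : ℂ := (w0 / ((Complex.abs w0 : ℝ):ℂ)) * ((starRingEnd ℂ) m / ((Complex.abs m : ℝ):ℂ)) with hb0
  have habsb0 : Complex.abs b0 = 1 := by
    rw [hb0, map_mul, map_div₀, map_div₀, Complex.abs_conj, Complex.abs_ofReal, Complex.abs_ofReal,
      abs_of_pos (by linarith : (0:ℝ) < Complex.abs w0), abs_of_pos (by linarith : (0:ℝ) < Complex.abs m),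
      div_self (by linarith : Complex.abs w0 ≠ 0), div_self (by linarith : Complex.abs m ≠ 0)]
    norm_num
  have hconj : m * (starRingEnd ℂ) m = ((Complex.abs m : ℝ) : ℂ)^2 := by
    rw [Complex.mul_conj, Complex.normSq_eq_abs]
    push_cast
    ring
  have hmb0 : m * b0 = w0 * (((Complex.abs m / Complex.abs w0 : ℝ)):ℂ) := by
    rw [hb0, Complex.ofReal_div]
    field_simp
    linear_combination hconj
  set F : ℝ → ℝ := fun s => Complex.abs (w0 - m * (b0 * Complex.exp ((s:ℂ) * Complex.I))) with hF
  have hcont : Continuous F := by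
    apply Complex.continuous_abs.comp
    continuity
  have hF0 : F 0 ≤ 1 := by
    have : F 0 = |Complex.abs w0 - Complex.abs m| := by
      rw [hF]
      simp only [Complex.ofReal_zero, zero_mul, Complex.exp_zero, mul_one]
      rw [hmb0]
      have hrw : w0 - w0 * (((Complex.abs m / Complex.abs w0 : ℝ)):ℂ)
          = w0 * ((((Complex.abs w0 - Complex.abs m) / Complex.abs w0 : ℝ)):ℂ) := by
        push_cast
        field_simp
      rw [hrw, map_mul, Complex.abs_ofReal, abs_div,
        abs_of_pos (by linarith : (0:ℝ) < Complex.abs w0)]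
      field_simp
    rw [this, abs_le]
    constructor <;> linarith
  have hFpi : 1 ≤ F Real.pi := by
    have : F Real.pi = Complex.abs w0 + Complex.abs m := by
      rw [hF]
      simp only [Complex.exp_pi_mul_I]
      have hstep : w0 - m * (b0 * (-1)) = w0 + m * b0 := by ring
      rw [hstep, hmb0]
      have hrw : w0 + w0 * (((Complex.abs m / Complex.abs w0 : ℝ)):ℂ)
          = w0 * ((((Complex.abs w0 + Complex.abs m) / Complex.abs w0 : ℝ)):ℂ) := by
        push_cast
        field_simp
      rw [hrw, map_mul, Complex.abs_ofReal, abs_div,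
        abs_of_pos (by linarith : (0:ℝ) < Complex.abs w0),
        abs_of_pos (by linarith : (0:ℝ) < Complex.abs w0 + Complex.abs m)]
      field_simp
    rw [this]; linarith
  have hivt := intermediate_value_Icc (le_of_lt Real.pi_pos) hcont.continuousOn
  have h1mem : (1:ℝ) ∈ Set.Icc (F 0) (F Real.pi) := ⟨hF0, hFpi⟩
  obtain ⟨s, _, hs⟩ := hivt h1mem
  refine ⟨w0 - m * (b0 * Complex.exp ((s:ℂ) * Complex.I)), b0 * Complex.exp ((s:ℂ) * Complex.I), hs, ?_, by ring⟩
  rw [map_mul, habsb0, Complex.abs_exp_ofReal_mul_I, one_mul]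

theorem stmt8 (n : ℕ) (Δ : Matrix (Fin n) (Fin n) ℂ)
    (hΔ : fnorm Δ < 1 / (3 * Real.sqrt n))
    (w : Fin n → ℂ) (hw : ∀ j, ‖w j - 1‖ ≤ 1 / 3) :
    ∃ t₁ t₂ : Fin n → ℂ, (∀ j, ‖t₁ j‖ = 1) ∧ (∀ j, ‖t₂ j‖ = 1) ∧
      w = t₁ + Matrix.mulVec (1 + Δ) t₂ := by
  rcases Nat.eq_zero_or_pos n with hn0 | hnpos
  · subst hn0
    exfalso
    simp [fnorm] at hΔ
  rcases Nat.lt_or_ge n 2 with h2 | h2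
  · -- n = 1
    have hn1 : n = 1 := by omega
    subst hn1
    have hfn : fnorm Δ = ‖Δ 0 0‖ := by
      rw [fnorm, Fin.sum_univ_one, Fin.sum_univ_one, Real.sqrt_sq (norm_nonneg _)]
    have hΔ1 : ‖Δ 0 0‖ < 1/3 := by
      rw [hfn] at hΔ
      simpa using hΔ
    have hm : Complex.abs ((1 + Δ 0 0) - 1) ≤ 1/3 := by
      rw [show (1 + Δ 0 0) - 1 = Δ 0 0 by ring, ← Complex.norm_eq_abs]
      linarith
    have hw0 : Complex.abs (w 0 - 1) ≤ 1/3 := by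
      rw [← Complex.norm_eq_abs]; exact hw 0
    obtain ⟨t1, t2, ht1, ht2, heq⟩ := one_dim (1 + Δ 0 0) (w 0) hm hw0
    refine ⟨fun _ => t1, fun _ => t2, fun j => by rw [Complex.norm_eq_abs]; exact ht1,
      fun j => by rw [Complex.norm_eq_abs]; exact ht2, ?_⟩
    funext j
    have hj : j = 0 := Subsingleton.elim j 0
    subst hj
    show w 0 = t1 + Matrix.mulVec (1 + Δ) (fun _ => t2) 0
    simp only [Matrix.mulVec, dotProduct, Fin.sum_univ_one, Matrix.add_apply,
      Matrix.one_apply_eq]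
    linear_combination heq
  · -- n ≥ 2 : Banach fixed point
    obtain ⟨c, hc⟩ : ∃ c : ℝ, c = 3 + 3/Real.sqrt 11 := ⟨_, rfl⟩
    have hsqrt11 : (3.31:ℝ) < Real.sqrt 11 := by
      rw [show (11:ℝ) = 11 from rfl]
      have : (3.31:ℝ)^2 < 11 := by norm_num
      nlinarith [Real.sq_sqrt (show (0:ℝ) ≤ 11 by norm_num), Real.sqrt_nonneg (11:ℝ)]
    have hsqrt2 : (1.41:ℝ) < Real.sqrt 2 := by
      have : (1.41:ℝ)^2 < 2 := by norm_num
      nlinarith [Real.sq_sqrt (show (0:ℝ) ≤ 2 by norm_num), Real.sqrt_nonneg (2:ℝ)]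
    have h11pos : (0:ℝ) < Real.sqrt 11 := by linarith
    have hc_pos : 0 < c := by rw [hc]; positivity
    have hfrac : 3/Real.sqrt 11 < 0.91 := by
      rw [div_lt_iff₀ h11pos]
      nlinarith
    have hc91 : c < 3.91 := by
      rw [hc]; linarith
    have hcb : c < 3 * Real.sqrt 2 := by linarith
    have hn2 : (2:ℝ) ≤ (n:ℝ) := by exact_mod_cast h2
    have hsn : Real.sqrt 2 ≤ Real.sqrt n := Real.sqrt_le_sqrt hn2
    have hsnpos : (0:ℝ) < Real.sqrt n := by linarith [hsqrt2]
    have hfn0 : 0 ≤ fnorm Δ := Real.sqrt_nonneg _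
    have hq1 : fnorm Δ * c < 1 := by
      have step1 : fnorm Δ * c < (1/(3*Real.sqrt n)) * c :=
        mul_lt_mul_of_pos_right hΔ hc_pos
      have step2 : (1/(3*Real.sqrt n)) * c ≤ (1/(3*Real.sqrt 2)) * c := by
        gcongr
      have step3 : (1/(3*Real.sqrt 2)) * c < 1 := by
        rw [div_mul_eq_mul_div, one_mul, div_lt_one (by positivity)]
        exact hcb
      exact (step1.trans_le step2).trans step3
    have hfni : fnorm Δ * Real.sqrt n < 1/3 := by
      have hmul := mul_lt_mul_of_pos_right hΔ hsnpos
      have heq : (1/(3*Real.sqrt n)) * Real.sqrt n = 1/3 := by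
        field_simp
      rwa [heq] at hmul
    have hrow : ∀ j, Real.sqrt (∑ k, ‖Δ j k‖^2) ≤ fnorm Δ := by
      intro j
      apply Real.sqrt_le_sqrt
      exact Finset.single_le_sum (f := fun i => ∑ k, ‖Δ i k‖^2)
        (fun i _ => Finset.sum_nonneg fun k _ => by positivity) (Finset.mem_univ j)
    have hrowsq : ∀ j, (∑ k, ‖Δ j k‖^2) = (Real.sqrt (∑ k, ‖Δ j k‖^2))^2 := by
      intro j
      rw [Real.sq_sqrt (Finset.sum_nonneg fun k _ => by positivity)]
    have hfnsq : (fnorm Δ)^2 = ∑ i, ∑ j, ‖Δ i j‖ ^ 2 := by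
      rw [fnorm, Real.sq_sqrt (Finset.sum_nonneg fun i _ => Finset.sum_nonneg fun k _ => by positivity)]
    -- the domain
    set D : Set (EuclideanSpace ℂ (Fin n)) := {z | ∀ j, Complex.abs (z j - 1) ≤ 2/3} with hD
    -- the map
    set G : EuclideanSpace ℂ (Fin n) → EuclideanSpace ℂ (Fin n) :=
      fun z => WithLp.toLp 2 (fun j => w j - ∑ k, Δ j k * tt (z k)) with hG
    have hGapp : ∀ (z : EuclideanSpace ℂ (Fin n)) j, G z j = w j - ∑ k, Δ j k * tt (z k) :=
      fun z j => rfl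
    -- unit norms on D
    have htt1 : ∀ (z : EuclideanSpace ℂ (Fin n)), z ∈ D → ∀ k, Complex.abs (tt (z k)) = 1 := by
      intro z hz k
      obtain ⟨hb1, hb2⟩ := abs_bounds (hz k)
      exact tt_unit hb1 hb2
    -- invariance
    have hGD : ∀ z ∈ D, G z ∈ D := by
      intro z hz j
      have hsum : Complex.abs (∑ k, Δ j k * tt (z k)) ≤ fnorm Δ * Real.sqrt n := by
        have h1 := cs_row (fun k => Δ j k) (fun k => tt (z k))
        have h2 : (∑ k, ‖tt (z k)‖^2) = (n:ℝ) := by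
          have : ∀ k ∈ Finset.univ, ‖tt (z k)‖^2 = 1 := by
            intro k _
            rw [Complex.norm_eq_abs, htt1 z hz k]
            norm_num
          rw [Finset.sum_congr rfl this]
          simp
        rw [h2] at h1
        calc Complex.abs (∑ k, Δ j k * tt (z k)) ≤
              Real.sqrt (∑ k, ‖Δ j k‖^2) * Real.sqrt n := h1
          _ ≤ fnorm Δ * Real.sqrt n := by
              apply mul_le_mul_of_nonneg_right (hrow j) (Real.sqrt_nonneg _)
      have hdecomp : G z j - 1 = (w j - 1) - ∑ k, Δ j k * tt (z k) := by
        rw [hGapp]; ring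
      rw [hdecomp]
      calc Complex.abs ((w j - 1) - ∑ k, Δ j k * tt (z k))
          ≤ Complex.abs (w j - 1) + Complex.abs (∑ k, Δ j k * tt (z k)) :=
            Complex.abs.sub_le_add _ _
        _ ≤ 1/3 + fnorm Δ * Real.sqrt n := by
            have := hw j
            rw [Complex.norm_eq_abs] at this
            linarith
        _ ≤ 2/3 := by linarith
    -- contraction estimate
    have hlip : ∀ z z' : EuclideanSpace ℂ (Fin n), z ∈ D → z' ∈ D →
        dist (G z) (G z') ≤ (fnorm Δ * c) * dist z z' := by
      intro z z' hz hz'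
      rw [EuclideanSpace.dist_eq, EuclideanSpace.dist_eq]
      have hptwise : ∀ j, (dist (G z j) (G z' j))^2 ≤
          (∑ k, ‖Δ j k‖^2) * (c^2 * ∑ k, dist (z k) (z' k)^2) := by
        intro j
        have hdiff : G z j - G z' j = ∑ k, Δ j k * (tt (z' k) - tt (z k)) := by
          rw [hGapp, hGapp]
          rw [show (∑ k, Δ j k * (tt (z' k) - tt (z k)))
              = (∑ k, Δ j k * tt (z' k)) - ∑ k, Δ j k * tt (z k) from by
            rw [← Finset.sum_sub_distrib]
            exact Finset.sum_congr rfl fun k _ => by ring]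
          ring
        have h1 : dist (G z j) (G z' j) = Complex.abs (G z j - G z' j) := Complex.dist_eq _ _
        rw [h1, hdiff]
        have hnn1 : (0:ℝ) ≤ ∑ k, ‖Δ j k‖^2 := Finset.sum_nonneg fun k _ => by positivity
        have hnn2 : (0:ℝ) ≤ ∑ k, ‖tt (z' k) - tt (z k)‖^2 :=
          Finset.sum_nonneg fun k _ => by positivity
        have h2 := cs_row (fun k => Δ j k) (fun k => tt (z' k) - tt (z k))
        have h3 : (∑ k, ‖tt (z' k) - tt (z k)‖^2) ≤ c^2 * ∑ k, dist (z k) (z' k)^2 := by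
          rw [Finset.mul_sum]
          apply Finset.sum_le_sum
          intro k _
          have hlk := tt_lip (hz' k) (hz k)
          rw [← hc] at hlk
          have hnn : (0:ℝ) ≤ Complex.abs (tt (z' k) - tt (z k)) := Complex.abs.nonneg _
          have hsq : (Complex.abs (tt (z' k) - tt (z k)))^2 ≤ (c * Complex.abs (z' k - z k))^2 := by
            apply pow_le_pow_left₀ hnn hlk
          rw [Complex.norm_eq_abs, dist_comm (z k) (z' k), Complex.dist_eq]
          calc (Complex.abs (tt (z' k) - tt (z k)))^2 ≤ (c * Complex.abs (z' k - z k))^2 := hsq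
            _ = c^2 * Complex.abs (z' k - z k)^2 := by ring
        calc (Complex.abs (∑ k, Δ j k * (tt (z' k) - tt (z k))))^2
            ≤ (Real.sqrt (∑ k, ‖Δ j k‖^2) * Real.sqrt (∑ k, ‖tt (z' k) - tt (z k)‖^2))^2 := by
              apply pow_le_pow_left₀ (Complex.abs.nonneg _) h2
          _ = (∑ k, ‖Δ j k‖^2) * (∑ k, ‖tt (z' k) - tt (z k)‖^2) := by
              rw [mul_pow, Real.sq_sqrt hnn1, Real.sq_sqrt hnn2]
          _ ≤ (∑ k, ‖Δ j k‖^2) * (c^2 * ∑ k, dist (z k) (z' k)^2) := by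
              apply mul_le_mul_of_nonneg_left h3 hnn1
      have hsumall : (∑ j, dist (G z j) (G z' j)^2) ≤
          ((fnorm Δ * c) * Real.sqrt (∑ k, dist (z k) (z' k)^2))^2 := by
        calc (∑ j, dist (G z j) (G z' j)^2)
            ≤ ∑ j, (∑ k, ‖Δ j k‖^2) * (c^2 * ∑ k, dist (z k) (z' k)^2) :=
              Finset.sum_le_sum fun j _ => hptwise j
          _ = (∑ j, ∑ k, ‖Δ j k‖^2) * (c^2 * ∑ k, dist (z k) (z' k)^2) := by
              rw [← Finset.sum_mul]
          _ = ((fnorm Δ * c) * Real.sqrt (∑ k, dist (z k) (z' k)^2))^2 := by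
              have hnn : (0:ℝ) ≤ ∑ k, dist (z k) (z' k)^2 :=
                Finset.sum_nonneg fun k _ => sq_nonneg _
              rw [← hfnsq, mul_pow, mul_pow, Real.sq_sqrt hnn]
              ring
      calc Real.sqrt (∑ j, dist (G z j) (G z' j)^2)
          ≤ Real.sqrt (((fnorm Δ * c) * Real.sqrt (∑ k, dist (z k) (z' k)^2))^2) :=
            Real.sqrt_le_sqrt hsumall
        _ = (fnorm Δ * c) * Real.sqrt (∑ k, dist (z k) (z' k)^2) :=
            Real.sqrt_sq (mul_nonneg (mul_nonneg hfn0 hc_pos.le) (Real.sqrt_nonneg _))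
    -- set up the subtype
    have hDclosed : IsClosed D := by
      have : D = ⋂ j, {z : EuclideanSpace ℂ (Fin n) | Complex.abs (z j - 1) ≤ 2/3} := by
        ext z; simp [hD, Set.mem_iInter]
      rw [this]
      apply isClosed_iInter
      intro j
      have hconteval : Continuous fun z : EuclideanSpace ℂ (Fin n) => z j :=
        (EuclideanSpace.proj (𝕜 := ℂ) j).continuous
      exact isClosed_le (Complex.continuous_abs.comp (hconteval.sub continuous_const))
        continuous_const
    haveI : Nonempty D := ⟨⟨(WithLp.toLp 2 (fun _ => 1) : EuclideanSpace ℂ (Fin n)), by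
      intro j; simp; norm_num⟩⟩
    haveI : CompleteSpace D := hDclosed.completeSpace_coe
    set K : NNReal := ⟨fnorm Δ * c, mul_nonneg hfn0 hc_pos.le⟩ with hK
    set Gs : D → D := fun z => ⟨G z.1, hGD z.1 z.2⟩ with hGs
    have hcontr : ContractingWith K Gs := by
      constructor
      · rw [← NNReal.coe_lt_coe]
        exact hq1
      · apply LipschitzWith.of_dist_le_mul
        intro z z'
        rw [Subtype.dist_eq]
        exact hlip z.1 z'.1 z.2 z'.2
    set z := hcontr.fixedPoint Gs with hz
    have hfix : Gs z = z := hcontr.fixedPoint_isFixedPt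
    have hfix1 : ∀ j, z.1 j = w j - ∑ k, Δ j k * tt (z.1 k) := by
      intro j
      have : (Gs z).1 j = z.1 j := by rw [hfix]
      rw [← this]
    have hzb : ∀ j, Complex.abs (z.1 j - 1) ≤ 2/3 := z.2
    refine ⟨fun j => z.1 j - tt (z.1 j), fun k => tt (z.1 k), ?_, ?_, ?_⟩
    · intro j
      obtain ⟨hb1, hb2⟩ := abs_bounds (hzb j)
      rw [Complex.norm_eq_abs]
      exact tt_unit' hb1 hb2
    · intro k
      obtain ⟨hb1, hb2⟩ := abs_bounds (hzb k)
      rw [Complex.norm_eq_abs]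
      exact tt_unit hb1 hb2
    · funext j
      show w j = (z.1 j - tt (z.1 j)) + Matrix.mulVec (1 + Δ) (fun k => tt (z.1 k)) j
      rw [Matrix.add_mulVec, Matrix.one_mulVec]
      have hmv : Matrix.mulVec Δ (fun k => tt (z.1 k)) j = ∑ k, Δ j k * tt (z.1 k) := rfl
      have := hfix1 j
      simp only [Pi.add_apply]
      rw [hmv]
      linear_combination -this
end

section
/- Fix a compact set K ⊆ GL_n(ℂ). There exist ε > 0 and m_1 such that for all m ≥ m_1 and all (g_1,…,g_m) ∈ K^m, the set {∑_{i=1}^m g_i t_i : t_1,…,t_m ∈ T} contains an open ball of radius ε around some point of ℂ^n, where T = {(z_1,…,z_n) : all |z_j| = 1}. -/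
/-- Euclidean norm on `Fin n → ℂ`. -/
noncomputable def enorm {n : ℕ} (v : Fin n → ℂ) : ℝ :=
  Real.sqrt (∑ i, ‖v i‖ ^ 2)

/-- Open Euclidean ball in `Fin n → ℂ`. -/
def eball {n : ℕ} (x : Fin n → ℂ) (r : ℝ) : Set (Fin n → ℂ) :=
  {y | _root_.enorm (y - x) < r}

open Complex Metric

noncomputable def gfun (r : ℝ) : ℝ := Real.sqrt ((4 - r) / (4 * r))

noncomputable def vsel (z : ℂ) : ℂ :=
  z * (1/2 + Complex.I * (gfun (‖z‖^2) : ℝ))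

lemma gfun_sq {r : ℝ} (h1 : 0 < r) (h2 : r ≤ 9/4) : gfun r ^ 2 = (4 - r) / (4 * r) :=
  Real.sq_sqrt (div_nonneg (by linarith) (by linarith))

lemma normSq_half_add {g : ℝ} : Complex.normSq (1/2 + Complex.I * (g:ℂ)) = 1/4 + g^2 := by
  simp [Complex.normSq_apply]; ring

lemma normSq_half_sub {g : ℝ} : Complex.normSq (1/2 - Complex.I * (g:ℂ)) = 1/4 + g^2 := by
  simp [Complex.normSq_apply]; ring

lemma norm_eq_one_of_normSq {w : ℂ} (h : Complex.normSq w = 1) : ‖w‖ = 1 := by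
  rw [Complex.norm_def, h, Real.sqrt_one]

lemma mul_aux {r : ℝ} (h : 0 < r) : r * (1/4 + (4 - r)/(4*r)) = 1 := by
  field_simp; ring

lemma vsel_norm {z : ℂ} (h1 : 1/2 ≤ ‖z‖) (h2 : ‖z‖ ≤ 3/2) :
    ‖vsel z‖ = 1 ∧ ‖z - vsel z‖ = 1 := by
  have hz0 : (0:ℝ) < ‖z‖^2 := by nlinarith
  have hz2 : ‖z‖^2 ≤ 9/4 := by nlinarith
  have hg : gfun (‖z‖^2) ^ 2 = (4 - ‖z‖^2) / (4 * ‖z‖^2) := gfun_sq hz0 hz2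
  have hns : Complex.normSq z = ‖z‖^2 := by
    rw [Complex.sq_norm]
  constructor
  · apply norm_eq_one_of_normSq
    rw [vsel, Complex.normSq_mul, normSq_half_add, hns, hg]
    exact mul_aux hz0
  · apply norm_eq_one_of_normSq
    have : z - vsel z = z * (1/2 - Complex.I * (gfun (‖z‖^2) : ℝ)) := by
      rw [vsel]; ring
    rw [this, Complex.normSq_mul, normSq_half_sub, hns, hg]
    exact mul_aux hz0

example : True := trivial

lemma mem_D_norm {z : ℂ} (hz : z ∈ Metric.closedBall (-1 : ℂ) (1/2)) :
    1/2 ≤ ‖z‖ ∧ ‖z‖ ≤ 3/2 := by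
  rw [Metric.mem_closedBall, dist_eq_norm] at hz
  have h1 : ‖z - -1‖ = ‖z + 1‖ := by ring_nf
  rw [h1] at hz
  have hn : ‖(1:ℂ)‖ = 1 := by simp
  constructor
  · have h3 : ‖(1:ℂ)‖ ≤ ‖z + 1‖ + ‖z‖ := by
      calc ‖(1:ℂ)‖ = ‖(z+1) - z‖ := by ring_nf
      _ ≤ ‖z+1‖ + ‖z‖ := norm_sub_le _ _
    rw [hn] at h3
    linarith
  · have := norm_add_le z 1
    have h2 : ‖z‖ ≤ ‖z + 1‖ + ‖(1:ℂ)‖ := by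
      calc ‖z‖ = ‖(z+1) + (-1)‖ := by ring_nf
      _ ≤ ‖z+1‖ + ‖(-1:ℂ)‖ := norm_add_le _ _
      _ = ‖z+1‖ + ‖(1:ℂ)‖ := by rw [norm_neg]
    rw [hn] at h2
    linarith

lemma vsel_lip : ∃ L : NNReal, LipschitzOnWith L vsel (Metric.closedBall (-1 : ℂ) (1/2)) := by
  set U : Set ℂ := {z : ℂ | 1/8 < ‖z‖^2 ∧ ‖z‖^2 < 3} with hU
  have hUopen : IsOpen U := by
    have hcont : Continuous fun z : ℂ => ‖z‖^2 := (contDiff_norm_sq (𝕜 := ℝ) (n := 1)).continuous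
    exact (isOpen_lt continuous_const hcont).inter (isOpen_lt hcont continuous_const)
  have hDU : Metric.closedBall (-1 : ℂ) (1/2) ⊆ U := by
    intro z hz
    obtain ⟨h1, h2⟩ := mem_D_norm hz
    constructor <;> [nlinarith; nlinarith]
  have hcd : ContDiffOn ℝ 1 vsel U := by
    intro z hz
    apply ContDiffWithinAt.mono (s := Set.univ) _ (Set.subset_univ _)
    rw [contDiffWithinAt_univ]
    have hz1 : (0:ℝ) < ‖z‖^2 := lt_trans (by norm_num) hz.1
    have hden : (4:ℝ) * ‖z‖^2 ≠ 0 := by positivity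
    have harg : (4 - ‖z‖^2) / (4 * ‖z‖^2) ≠ 0 := by
      have : (0:ℝ) < (4 - ‖z‖^2) / (4 * ‖z‖^2) := by
        apply div_pos (by nlinarith [hz.2]) (by positivity)
      exact ne_of_gt this
    have hinner : ContDiffAt ℝ 1 (fun z : ℂ => (4 - ‖z‖^2) / (4 * ‖z‖^2)) z := by
      apply ContDiffAt.div
      · exact (contDiff_const.sub (contDiff_norm_sq ℝ)).contDiffAt
      · exact (contDiff_const.mul (contDiff_norm_sq ℝ)).contDiffAt
      · exact hden
    have hsqrt : ContDiffAt ℝ 1 (fun z : ℂ => gfun (‖z‖^2)) z := by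
      have := (Real.contDiffAt_sqrt (n := 1) harg).comp z hinner
      exact this
    have hofreal : ContDiffAt ℝ 1 (fun z : ℂ => ((gfun (‖z‖^2) : ℝ) : ℂ)) z :=
      Complex.ofRealCLM.contDiff.contDiffAt.comp z hsqrt
    exact contDiffAt_id.mul ((contDiffAt_const.add (contDiffAt_const.mul hofreal)))
  have hder : ∀ x ∈ Metric.closedBall (-1 : ℂ) (1/2), DifferentiableAt ℝ vsel x := fun x hx =>
    ((hcd.contDiffAt (hUopen.mem_nhds (hDU hx))).differentiableAt one_ne_zero)
  have hfc : ContinuousOn (fderiv ℝ vsel) U := hcd.continuousOn_fderiv_of_isOpen hUopen le_rfl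
  obtain ⟨C, hC⟩ := (isCompact_closedBall (-1 : ℂ) (1/2)).exists_bound_of_continuousOn
    (hfc.mono hDU)
  refine ⟨C.toNNReal, ?_⟩
  apply (convex_closedBall _ _).lipschitzOnWith_of_nnnorm_fderiv_le hder
  intro x hx
  have : ‖fderiv ℝ vsel x‖ ≤ ↑C.toNNReal := le_trans (hC x hx) (Real.le_coe_toNNReal C)
  exact this

lemma mulVec_entry_bound {n : ℕ} (A : Matrix (Fin n) (Fin n) ℂ) (v : Fin n → ℂ) {a b : ℝ}
    (ha0 : 0 ≤ a) (ha : ∀ i j, ‖A i j‖ ≤ a) (hb : ∀ j, ‖v j‖ ≤ b) (i : Fin n) :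
    ‖A.mulVec v i‖ ≤ n * (a * b) := by
  have : A.mulVec v i = ∑ j, A i j * v j := rfl
  rw [this]
  calc ‖∑ j, A i j * v j‖ ≤ ∑ j : Fin n, (a * b) := by
        apply norm_sum_le_of_le
        intro j _
        rw [norm_mul]
        exact mul_le_mul (ha i j) (hb j) (norm_nonneg _) ha0
  _ = n * (a * b) := by simp [Finset.sum_const, Finset.card_univ]

lemma enorm_coord {n : ℕ} {v : Fin n → ℂ} {ε : ℝ} (h : _root_.enorm v < ε) (j : Fin n) : ‖v j‖ < ε := by
  have h1 : ‖v j‖ = Real.sqrt (‖v j‖^2) := (Real.sqrt_sq (norm_nonneg _)).symm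
  have h2 : ‖v j‖^2 ≤ ∑ i, ‖v i‖^2 :=
    Finset.single_le_sum (fun i _ => sq_nonneg ‖v i‖) (Finset.mem_univ j)
  calc ‖v j‖ ≤ _root_.enorm v := by rw [h1, _root_.enorm]; exact Real.sqrt_le_sqrt h2
  _ < ε := h

lemma inv_entry_bound {n : ℕ} {K : Set (Matrix (Fin n) (Fin n) ℂ)}
    (hK : ∀ g ∈ K, g.det ≠ 0) (hc : IsCompact K) :
    ∃ C : ℝ, 1 ≤ C ∧ ∀ g ∈ K, ∀ i j, ‖(g⁻¹ : Matrix (Fin n) (Fin n) ℂ) i j‖ ≤ C := by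
  set f : Matrix (Fin n) (Fin n) ℂ → (Fin n → Fin n → ℂ) :=
    fun g => fun i j => (g.det)⁻¹ * g.adjugate i j with hf
  have hfc : ContinuousOn f K := by
    apply continuousOn_pi.2; intro i
    apply continuousOn_pi.2; intro j
    apply ContinuousOn.mul
    · exact ContinuousOn.inv₀ ((continuous_id.matrix_det).continuousOn) hK
    · exact ((continuous_id.matrix_adjugate).matrix_elem i j).continuousOn
  obtain ⟨C0, hC0⟩ := hc.exists_bound_of_continuousOn hfc
  refine ⟨max C0 1, le_max_right _ _, ?_⟩
  intro g hg i j
  have hinv : (g⁻¹ : Matrix (Fin n) (Fin n) ℂ) i j = f g i j := by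
    rw [Matrix.inv_def, Matrix.smul_apply, Ring.inverse_eq_inv, smul_eq_mul]
  rw [hinv]
  calc ‖f g i j‖ ≤ ‖f g i‖ := norm_le_pi_norm (f g i) j
  _ ≤ ‖f g‖ := norm_le_pi_norm (f g) i
  _ ≤ C0 := hC0 g hg
  _ ≤ max C0 1 := le_max_left _ _

lemma cover_lemma {n : ℕ} {K : Set (Matrix (Fin n) (Fin n) ℂ)} (hc : IsCompact K)
    {δ : ℝ} (hδ : 0 < δ) :
    ∃ T : Finset (Matrix (Fin n) (Fin n) ℂ),
      K ⊆ ⋃ a ∈ T, {g : Matrix (Fin n) (Fin n) ℂ | ∀ i j, ‖g i j - a i j‖ < δ} := by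
  set V : Matrix (Fin n) (Fin n) ℂ → Set (Matrix (Fin n) (Fin n) ℂ) :=
    fun a => {g | ∀ i j, ‖g i j - a i j‖ < δ} with hV
  have hopen : ∀ a, IsOpen (V a) := by
    intro a
    have : V a = ⋂ i, ⋂ j, (fun g : Matrix (Fin n) (Fin n) ℂ => g i j) ⁻¹'
        Metric.ball (a i j) δ := by
      ext g
      simp [hV, Metric.mem_ball, dist_eq_norm]
    rw [this]
    exact isOpen_iInter_of_finite fun i => isOpen_iInter_of_finite fun j =>
      (Metric.isOpen_ball).preimage (continuous_id.matrix_elem i j)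
  have hcov : K ⊆ ⋃ a, V a := by
    intro g _
    exact Set.mem_iUnion.2 ⟨g, fun i j => by simpa using hδ⟩
  exact hc.elim_finite_subcover V hopen hcov

noncomputable def v2 {n : ℕ} (z : Fin n → ℂ) : Fin n → ℂ := fun j => vsel (z j)
noncomputable def v3 {n : ℕ} (z : Fin n → ℂ) : Fin n → ℂ := fun j => z j - vsel (z j)

lemma v2_norm {n : ℕ} {z : Fin n → ℂ} (hz : ∀ j, z j ∈ Metric.closedBall (-1 : ℂ) (1/2)) (j : Fin n) :
    ‖v2 z j‖ = 1 := (vsel_norm (mem_D_norm (hz j)).1 (mem_D_norm (hz j)).2).1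

lemma v3_norm {n : ℕ} {z : Fin n → ℂ} (hz : ∀ j, z j ∈ Metric.closedBall (-1 : ℂ) (1/2)) (j : Fin n) :
    ‖v3 z j‖ = 1 := (vsel_norm (mem_D_norm (hz j)).1 (mem_D_norm (hz j)).2).2

lemma core {n : ℕ} {C L δ ε : ℝ} (hC : 1 ≤ C) (hL : 1 ≤ L) (hδ : 0 ≤ δ) (hε : 0 ≤ ε)
    (hlip : ∀ z z' : ℂ, z ∈ Metric.closedBall (-1:ℂ) (1/2) → z' ∈ Metric.closedBall (-1:ℂ) (1/2) →
      ‖vsel z - vsel z'‖ ≤ L * ‖z - z'‖)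
    (hsmall1 : (n:ℝ) * (C * (ε + ((n:ℝ)*(δ*2) + (n:ℝ)*(δ*2)))) ≤ 1/2)
    (hsmall2 : (n:ℝ) * (C * ((n:ℝ)*(δ*L) + (n:ℝ)*(δ*(1+L)))) ≤ 1/2)
    (A E₂ E₃ : Matrix (Fin n) (Fin n) ℂ) (hA : A.det ≠ 0)
    (hAinv : ∀ i j, ‖(A⁻¹ : Matrix (Fin n) (Fin n) ℂ) i j‖ ≤ C)
    (hE₂ : ∀ i j, ‖E₂ i j‖ ≤ δ) (hE₃ : ∀ i j, ‖E₃ i j‖ ≤ δ)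
    (w c : Fin n → ℂ)
    (hw : ∀ j, ‖w j - (c + E₂.mulVec (v2 (fun _ => -1)) + E₃.mulVec (v3 (fun _ => -1))) j‖ ≤ ε) :
    ∃ z : Fin n → ℂ, (∀ j, z j ∈ Metric.closedBall (-1 : ℂ) (1/2)) ∧
      c + A.mulVec ((fun _ => 1) + z) + E₂.mulVec (v2 z) + E₃.mulVec (v3 z) = w := by
  classical
  set D : Set ℂ := Metric.closedBall (-1 : ℂ) (1/2) with hD
  set z₀ : Fin n → ℂ := fun _ => -1 with hz₀
  have hz₀D : ∀ j, z₀ j ∈ D := fun j => by simp [hz₀, hD]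
  set Y : Matrix (Fin n) (Fin n) ℂ := A⁻¹ with hY
  set y : Fin n → ℂ := c + E₂.mulVec (v2 z₀) + E₃.mulVec (v3 z₀) with hy
  set Sset : Set (Fin n → ℂ) := {z | ∀ j, z j ∈ D} with hSset
  have hclosed : IsClosed Sset := by
    have : Sset = ⋂ j, (fun z : Fin n → ℂ => z j) ⁻¹' D := by
      ext z; simp [hSset]
    rw [this]
    exact isClosed_iInter fun j => (Metric.isClosed_closedBall).preimage (continuous_apply j)
  haveI : CompleteSpace Sset := hclosed.completeSpace_coe
  haveI : Nonempty Sset := ⟨⟨z₀, hz₀D⟩⟩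
  -- the map
  set F : (Fin n → ℂ) → (Fin n → ℂ) :=
    fun z => Y.mulVec (w - c - E₂.mulVec (v2 z) - E₃.mulVec (v3 z)) - (fun _ => 1) with hF
  -- self map bound
  have hself : ∀ z : Fin n → ℂ, (∀ j, z j ∈ D) → ∀ j, F z j ∈ D := by
    intro z hz j
    have hu : w - c - E₂.mulVec (v2 z) - E₃.mulVec (v3 z) =
        (w - y) + (E₂.mulVec (v2 z₀) - E₂.mulVec (v2 z)) +
          (E₃.mulVec (v3 z₀) - E₃.mulVec (v3 z)) := by
      rw [hy]; abel
    have hb2 : ∀ k, ‖(v2 z₀ - v2 z) k‖ ≤ 2 := by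
      intro k
      calc ‖(v2 z₀ - v2 z) k‖ ≤ ‖v2 z₀ k‖ + ‖v2 z k‖ := norm_sub_le _ _
      _ ≤ 2 := by rw [v2_norm hz₀D k, v2_norm hz k]; norm_num
    have hb3 : ∀ k, ‖(v3 z₀ - v3 z) k‖ ≤ 2 := by
      intro k
      calc ‖(v3 z₀ - v3 z) k‖ ≤ ‖v3 z₀ k‖ + ‖v3 z k‖ := norm_sub_le _ _
      _ ≤ 2 := by rw [v3_norm hz₀D k, v3_norm hz k]; norm_num
    have hub : ∀ k, ‖(w - c - E₂.mulVec (v2 z) - E₃.mulVec (v3 z)) k‖ ≤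
        ε + ((n:ℝ)*(δ*2) + (n:ℝ)*(δ*2)) := by
      intro k
      rw [hu]
      have h1 : ‖(w - y) k‖ ≤ ε := by
        have := hw k
        simpa [hy, Pi.sub_apply] using this
      have h2 : ‖(E₂.mulVec (v2 z₀) - E₂.mulVec (v2 z)) k‖ ≤ (n:ℝ)*(δ*2) := by
        rw [← Matrix.mulVec_sub]
        exact mulVec_entry_bound E₂ _ hδ hE₂ hb2 k
      have h3 : ‖(E₃.mulVec (v3 z₀) - E₃.mulVec (v3 z)) k‖ ≤ (n:ℝ)*(δ*2) := by
        rw [← Matrix.mulVec_sub]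
        exact mulVec_entry_bound E₃ _ hδ hE₃ hb3 k
      calc ‖((w - y) + (E₂.mulVec (v2 z₀) - E₂.mulVec (v2 z)) +
          (E₃.mulVec (v3 z₀) - E₃.mulVec (v3 z))) k‖
          ≤ ‖((w - y) + (E₂.mulVec (v2 z₀) - E₂.mulVec (v2 z))) k‖ +
            ‖(E₃.mulVec (v3 z₀) - E₃.mulVec (v3 z)) k‖ := norm_add_le _ _
      _ ≤ (‖(w - y) k‖ + ‖(E₂.mulVec (v2 z₀) - E₂.mulVec (v2 z)) k‖) +
            ‖(E₃.mulVec (v3 z₀) - E₃.mulVec (v3 z)) k‖ := by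
            gcongr; exact norm_add_le _ _
      _ ≤ ε + ((n:ℝ)*(δ*2) + (n:ℝ)*(δ*2)) := by linarith
    have hYb : ‖Y.mulVec (w - c - E₂.mulVec (v2 z) - E₃.mulVec (v3 z)) j‖ ≤
        (n:ℝ) * (C * (ε + ((n:ℝ)*(δ*2) + (n:ℝ)*(δ*2)))) :=
      mulVec_entry_bound Y _ (le_trans zero_le_one hC) hAinv hub j
    rw [hD, Metric.mem_closedBall, dist_eq_norm]
    have : F z j - (-1) = Y.mulVec (w - c - E₂.mulVec (v2 z) - E₃.mulVec (v3 z)) j := by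
      simp [hF]
    rw [this]
    linarith
  set Φ : Sset → Sset := fun z => ⟨F z.1, hself z.1 z.2⟩ with hΦ
  have hcontr : ContractingWith (1/2 : NNReal) Φ := by
    constructor
    · exact half_lt_self one_pos
    · apply LipschitzWith.of_dist_le_mul
      intro z z'
      rw [Subtype.dist_eq, Subtype.dist_eq]
      show dist (F z.1) (F z'.1) ≤ _
      set d : ℝ := dist z.1 z'.1 with hd
      have hd0 : 0 ≤ d := dist_nonneg
      have key : ∀ j, dist (F z.1 j) (F z'.1 j) ≤ (1/2 : ℝ) * d := by
        intro j
        have hdiffF : F z.1 - F z'.1 =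
            Y.mulVec (E₂.mulVec (v2 z'.1 - v2 z.1) + E₃.mulVec (v3 z'.1 - v3 z.1)) := by
          show (Y.mulVec (w - c - E₂.mulVec (v2 z.1) - E₃.mulVec (v3 z.1)) - fun _ => 1) -
            (Y.mulVec (w - c - E₂.mulVec (v2 z'.1) - E₃.mulVec (v3 z'.1)) - fun _ => 1) = _
          rw [sub_sub_sub_cancel_right, ← Matrix.mulVec_sub]
          congr 1
          rw [Matrix.mulVec_sub E₂, Matrix.mulVec_sub E₃]
          abel
        have hdiff : F z.1 j - F z'.1 j =
            Y.mulVec (E₂.mulVec (v2 z'.1 - v2 z.1) + E₃.mulVec (v3 z'.1 - v3 z.1)) j := by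
          have := congrFun hdiffF j
          simpa using this
        have hb2 : ∀ k, ‖(v2 z'.1 - v2 z.1) k‖ ≤ L * d := by
          intro k
          have h1 : ‖vsel (z'.1 k) - vsel (z.1 k)‖ ≤ L * ‖z'.1 k - z.1 k‖ :=
            hlip _ _ (z'.2 k) (z.2 k)
          have h2 : ‖z'.1 k - z.1 k‖ ≤ d := by
            rw [← dist_eq_norm, hd, dist_comm z.1 z'.1]
            exact dist_le_pi_dist z'.1 z.1 k
          calc ‖(v2 z'.1 - v2 z.1) k‖ = ‖vsel (z'.1 k) - vsel (z.1 k)‖ := rfl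
          _ ≤ L * ‖z'.1 k - z.1 k‖ := h1
          _ ≤ L * d := by nlinarith
        have hb3 : ∀ k, ‖(v3 z'.1 - v3 z.1) k‖ ≤ (1 + L) * d := by
          intro k
          have h1 : ‖vsel (z'.1 k) - vsel (z.1 k)‖ ≤ L * ‖z'.1 k - z.1 k‖ :=
            hlip _ _ (z'.2 k) (z.2 k)
          have h2 : ‖z'.1 k - z.1 k‖ ≤ d := by
            rw [← dist_eq_norm, hd, dist_comm z.1 z'.1]
            exact dist_le_pi_dist z'.1 z.1 k
          have h3 : (v3 z'.1 - v3 z.1) k =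
              (z'.1 k - z.1 k) - (vsel (z'.1 k) - vsel (z.1 k)) := by
            simp [v3]; ring
          rw [h3]
          calc ‖(z'.1 k - z.1 k) - (vsel (z'.1 k) - vsel (z.1 k))‖
              ≤ ‖z'.1 k - z.1 k‖ + ‖vsel (z'.1 k) - vsel (z.1 k)‖ := norm_sub_le _ _
          _ ≤ d + L * d := by nlinarith
          _ = (1 + L) * d := by ring
        have harg : ∀ k, ‖(E₂.mulVec (v2 z'.1 - v2 z.1) + E₃.mulVec (v3 z'.1 - v3 z.1)) k‖ ≤
            (n:ℝ)*(δ*(L*d)) + (n:ℝ)*(δ*((1+L)*d)) := by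
          intro k
          have h2 := mulVec_entry_bound E₂ (v2 z'.1 - v2 z.1) hδ hE₂ hb2 k
          have h3 := mulVec_entry_bound E₃ (v3 z'.1 - v3 z.1) hδ hE₃ hb3 k
          calc ‖(E₂.mulVec (v2 z'.1 - v2 z.1) + E₃.mulVec (v3 z'.1 - v3 z.1)) k‖
              ≤ ‖E₂.mulVec (v2 z'.1 - v2 z.1) k‖ + ‖E₃.mulVec (v3 z'.1 - v3 z.1) k‖ :=
                norm_add_le _ _
          _ ≤ (n:ℝ)*(δ*(L*d)) + (n:ℝ)*(δ*((1+L)*d)) := by linarith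
        have hfin := mulVec_entry_bound Y _ (le_trans zero_le_one hC) hAinv harg j
        rw [dist_eq_norm, hdiff]
        calc ‖Y.mulVec (E₂.mulVec (v2 z'.1 - v2 z.1) + E₃.mulVec (v3 z'.1 - v3 z.1)) j‖
            ≤ (n:ℝ) * (C * ((n:ℝ)*(δ*(L*d)) + (n:ℝ)*(δ*((1+L)*d)))) := hfin
        _ ≤ (1/2 : ℝ) * d := by nlinarith [mul_le_mul_of_nonneg_right hsmall2 hd0]
      have : dist (F z.1) (F z'.1) ≤ (1/2 : ℝ) * d :=
        (dist_pi_le_iff (by positivity)).2 key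
      calc dist (F z.1) (F z'.1) ≤ (1/2 : ℝ) * d := this
      _ = ((1/2 : NNReal) : ℝ) * dist z z' := by
          rw [Subtype.dist_eq]; norm_num; exact hd
  set zs : Sset := ContractingWith.fixedPoint Φ hcontr with hzs
  have hfix : Φ zs = zs := hcontr.fixedPoint_isFixedPt
  refine ⟨zs.1, zs.2, ?_⟩
  have hval : F zs.1 = zs.1 := congrArg Subtype.val hfix
  have hsum : A.mulVec ((fun _ => (1:ℂ)) + zs.1) =
      w - c - E₂.mulVec (v2 zs.1) - E₃.mulVec (v3 zs.1) := by
    have h1 : (fun _ : Fin n => (1:ℂ)) + zs.1 =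
        Y.mulVec (w - c - E₂.mulVec (v2 zs.1) - E₃.mulVec (v3 zs.1)) := by
      conv_lhs => rw [← hval]
      show (fun _ : Fin n => (1:ℂ)) + (Y.mulVec _ - fun _ => 1) = _
      abel
    rw [h1, Matrix.mulVec_mulVec, Matrix.mul_nonsing_inv A (isUnit_iff_ne_zero.2 hA),
      Matrix.one_mulVec]
  rw [hsum]
  abel

theorem stmt13 (n : ℕ) (K : Set (Matrix (Fin n) (Fin n) ℂ))
    (hK : ∀ g ∈ K, g.det ≠ 0) (hc : IsCompact K) :
    ∃ ε : ℝ, 0 < ε ∧ ∃ m₁ : ℕ, ∀ m : ℕ, m₁ ≤ m →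
      ∀ g : Fin m → Matrix (Fin n) (Fin n) ℂ, (∀ i, g i ∈ K) →
        ∃ y : Fin n → ℂ, eball y ε ⊆
          {v | ∃ t : Fin m → (Fin n → ℂ),
            (∀ i j, ‖t i j‖ = 1) ∧ v = ∑ i, Matrix.mulVec (g i) (t i)} := by
  classical
  obtain ⟨C, hC1, hCb⟩ := inv_entry_bound hK hc
  obtain ⟨L0, hlip0⟩ := vsel_lip
  set L : ℝ := max (L0 : ℝ) 1 with hLdef
  have hL : 1 ≤ L := le_max_right _ _
  have hL0 : 0 < L := lt_of_lt_of_le one_pos hL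
  have hC0 : 0 < C := lt_of_lt_of_le one_pos hC1
  have hlip : ∀ z z' : ℂ, z ∈ Metric.closedBall (-1:ℂ) (1/2) →
      z' ∈ Metric.closedBall (-1:ℂ) (1/2) → ‖vsel z - vsel z'‖ ≤ L * ‖z - z'‖ := by
    intro z z' hz hz'
    have h1 : dist (vsel z) (vsel z') ≤ (L0 : ℝ) * dist z z' := hlip0.dist_le_mul z hz z' hz'
    rw [dist_eq_norm, dist_eq_norm] at h1
    have h2 : (L0 : ℝ) * ‖z - z'‖ ≤ L * ‖z - z'‖ :=
      mul_le_mul_of_nonneg_right (le_max_left _ _) (norm_nonneg _)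
    linarith
  set nr : ℝ := (n : ℝ) + 1 with hnrdef
  have hnr : (0:ℝ) < nr := by positivity
  have hnnr : (n : ℝ) ≤ nr := by rw [hnrdef]; linarith
  set δ : ℝ := 1 / (100 * nr^2 * C * L) with hδdef
  set ε : ℝ := 1 / (8 * nr * C) with hεdef
  have hδ0 : 0 < δ := by rw [hδdef]; positivity
  have hε0 : 0 < ε := by rw [hεdef]; positivity
  have e1 : nr * (C * ε) = 1/8 := by rw [hεdef]; field_simp
  have e2 : nr^2 * (C * δ) = 1/(100*L) := by rw [hδdef]; field_simp
  have h100 : 1/(100*L) ≤ 1/100 := by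
    rw [div_le_div_iff₀ (by positivity) (by norm_num)]
    nlinarith
  have hsmall1 : (n:ℝ) * (C * (ε + ((n:ℝ)*((2*δ)*2) + (n:ℝ)*((2*δ)*2)))) ≤ 1/2 := by
    have step : (n:ℝ) * (C * (ε + ((n:ℝ)*((2*δ)*2) + (n:ℝ)*((2*δ)*2)))) ≤
        nr * (C * (ε + (nr*((2*δ)*2) + nr*((2*δ)*2)))) := by
      gcongr
    have eq1 : nr * (C * (ε + (nr*((2*δ)*2) + nr*((2*δ)*2)))) =
        nr * (C * ε) + 8 * (nr^2 * (C * δ)) := by ring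
    rw [eq1, e1, e2] at step
    linarith
  have hsmall2 : (n:ℝ) * (C * ((n:ℝ)*((2*δ)*L) + (n:ℝ)*((2*δ)*(1+L)))) ≤ 1/2 := by
    have step : (n:ℝ) * (C * ((n:ℝ)*((2*δ)*L) + (n:ℝ)*((2*δ)*(1+L)))) ≤
        nr * (C * (nr*((2*δ)*L) + nr*((2*δ)*(1+L)))) := by
      gcongr <;> nlinarith
    have eq1 : nr * (C * (nr*((2*δ)*L) + nr*((2*δ)*(1+L)))) =
        (nr^2 * (C * δ)) * (2*L) + (nr^2 * (C * δ)) * (2*(1+L)) := by ring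
    rw [eq1, e2] at step
    have : (1/(100*L)) * (2*L) + (1/(100*L)) * (2*(1+L)) ≤ 1/2 := by
      rw [div_mul_eq_mul_div, div_mul_eq_mul_div, ← add_div,
        div_le_div_iff₀ (by positivity) (by norm_num)]
      nlinarith
    linarith
  obtain ⟨T, hT⟩ := cover_lemma hc hδ0
  refine ⟨ε, hε0, 2 * T.card + 1, ?_⟩
  intro m hm g hgK
  have hch : ∀ i : Fin m, ∃ a ∈ T, ∀ p q, ‖g i p q - a p q‖ < δ := by
    intro i
    have := hT (hgK i)
    rw [Set.mem_iUnion₂] at this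
    obtain ⟨a, haT, hag⟩ := this
    exact ⟨a, haT, hag⟩
  choose cc hccT hccδ using hch
  have hcard : T.card * 2 < (Finset.univ : Finset (Fin m)).card := by
    rw [Finset.card_univ, Fintype.card_fin]
    omega
  obtain ⟨a, haT, hfib⟩ := Finset.exists_lt_card_fiber_of_mul_lt_card_of_maps_to
    (fun (i : Fin m) (_ : i ∈ Finset.univ) => hccT i) hcard
  set B := Finset.univ.filter (fun i : Fin m => cc i = a) with hB
  obtain ⟨i₁, hi₁⟩ := Finset.card_pos.1 (show 0 < B.card by omega)
  obtain ⟨i₂, hi₂⟩ := Finset.card_pos.1 (show 0 < (B.erase i₁).card by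
    rw [Finset.card_erase_of_mem hi₁]; omega)
  obtain ⟨i₃, hi₃⟩ := Finset.card_pos.1 (show 0 < ((B.erase i₁).erase i₂).card by
    rw [Finset.card_erase_of_mem hi₂, Finset.card_erase_of_mem hi₁]; omega)
  have hi₂B : i₂ ∈ B := Finset.mem_of_mem_erase hi₂
  have hi₃B : i₃ ∈ B := Finset.mem_of_mem_erase (Finset.mem_of_mem_erase hi₃)
  have h21 : i₂ ≠ i₁ := Finset.ne_of_mem_erase hi₂
  have h32 : i₃ ≠ i₂ := Finset.ne_of_mem_erase hi₃
  have h31 : i₃ ≠ i₁ := Finset.ne_of_mem_erase (Finset.mem_of_mem_erase hi₃)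
  have hca : ∀ i ∈ B, ∀ p q, ‖g i p q - a p q‖ < δ := by
    intro i hi p q
    have hia : cc i = a := (Finset.mem_filter.1 hi).2
    rw [← hia]
    exact hccδ i p q
  have hEb : ∀ (i : Fin m), i ∈ B → ∀ p q, ‖(g i - g i₁) p q‖ ≤ 2*δ := by
    intro i hi p q
    have h1 := hca i hi p q
    have h2 := hca i₁ hi₁ p q
    have heq : (g i - g i₁) p q = (g i p q - a p q) - (g i₁ p q - a p q) := by
      simp [Matrix.sub_apply]
    rw [heq]
    calc ‖(g i p q - a p q) - (g i₁ p q - a p q)‖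
        ≤ ‖g i p q - a p q‖ + ‖g i₁ p q - a p q‖ := norm_sub_le _ _
    _ ≤ 2*δ := by linarith
  set c0 : Fin n → ℂ :=
    ∑ i ∈ Finset.univ \ ({i₁, i₂, i₃} : Finset (Fin m)), (g i).mulVec (fun _ => 1) with hc0
  set z₀ : Fin n → ℂ := fun _ => -1 with hz₀
  refine ⟨c0 + (g i₂ - g i₁).mulVec (v2 z₀) + (g i₃ - g i₁).mulVec (v3 z₀), ?_⟩
  intro w hw
  have hwc : ∀ j, ‖w j - (c0 + (g i₂ - g i₁).mulVec (v2 (fun _ => -1))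
      + (g i₃ - g i₁).mulVec (v3 (fun _ => -1))) j‖ ≤ ε := by
    intro j
    exact le_of_lt (enorm_coord hw j)
  obtain ⟨z, hzD, hzeq⟩ := core hC1 hL (by positivity) (le_of_lt hε0) hlip hsmall1 hsmall2
    (g i₁) (g i₂ - g i₁) (g i₃ - g i₁) (hK _ (hgK i₁)) (hCb _ (hgK i₁))
    (hEb i₂ hi₂B) (hEb i₃ hi₃B) w c0 hwc
  set t : Fin m → Fin n → ℂ :=
    fun i => if i = i₂ then v2 z else if i = i₃ then v3 z else (fun _ => 1) with ht
  refine ⟨t, ?_, ?_⟩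
  · intro i j
    by_cases h2 : i = i₂
    · subst h2
      show ‖(if i = i then v2 z else if i = i₃ then v3 z else fun _ => (1:ℂ)) j‖ = 1
      rw [if_pos rfl]
      exact v2_norm hzD j
    · by_cases h3 : i = i₃
      · subst h3
        show ‖(if i = i₂ then v2 z else if i = i then v3 z else fun _ => (1:ℂ)) j‖ = 1
        rw [if_neg h2, if_pos rfl]
        exact v3_norm hzD j
      · show ‖(if i = i₂ then v2 z else if i = i₃ then v3 z else fun _ => (1:ℂ)) j‖ = 1
        rw [if_neg h2, if_neg h3]
        norm_num
  · -- sum computation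
    have hsplit : ∑ i, (g i).mulVec (t i) =
        ∑ i ∈ Finset.univ \ ({i₁, i₂, i₃} : Finset (Fin m)), (g i).mulVec (t i) +
          ∑ i ∈ ({i₁, i₂, i₃} : Finset (Fin m)), (g i).mulVec (t i) :=
      (Finset.sum_sdiff (Finset.subset_univ _)).symm
    have hrest : ∑ i ∈ Finset.univ \ ({i₁, i₂, i₃} : Finset (Fin m)), (g i).mulVec (t i)
        = c0 := by
      rw [hc0]
      apply Finset.sum_congr rfl
      intro i hi
      have hi' : i ∉ ({i₁, i₂, i₃} : Finset (Fin m)) := (Finset.mem_sdiff.1 hi).2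
      have h2 : i ≠ i₂ := fun h => hi' (by subst h; simp)
      have h3 : i ≠ i₃ := fun h => hi' (by subst h; simp)
      show (g i).mulVec (if i = i₂ then v2 z else if i = i₃ then v3 z else fun _ => (1:ℂ))
          = (g i).mulVec (fun _ => 1)
      rw [if_neg h2, if_neg h3]
    have ht1 : t i₁ = fun _ => (1:ℂ) := by
      show (if i₁ = i₂ then v2 z else if i₁ = i₃ then v3 z else fun _ => (1:ℂ)) = _
      rw [if_neg (Ne.symm h21), if_neg (Ne.symm h31)]
    have ht2 : t i₂ = v2 z := by
      show (if i₂ = i₂ then v2 z else if i₂ = i₃ then v3 z else fun _ => (1:ℂ)) = _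
      rw [if_pos rfl]
    have ht3 : t i₃ = v3 z := by
      show (if i₃ = i₂ then v2 z else if i₃ = i₃ then v3 z else fun _ => (1:ℂ)) = _
      rw [if_neg h32, if_pos rfl]
    have hs3sum : ∑ i ∈ ({i₁, i₂, i₃} : Finset (Fin m)), (g i).mulVec (t i) =
        (g i₁).mulVec (fun _ => 1) + (g i₂).mulVec (v2 z) + (g i₃).mulVec (v3 z) := by
      rw [Finset.sum_insert (by simp [h21.symm, h31.symm]),
        Finset.sum_insert (by simp [h32.symm]), Finset.sum_singleton, ht1, ht2, ht3]
      abel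
    have hz23 : v2 z + v3 z = z := by
      funext j
      simp [v2, v3]
    have hAz : (g i₁).mulVec z = (g i₁).mulVec (v2 z) + (g i₁).mulVec (v3 z) := by
      rw [← Matrix.mulVec_add, hz23]
    have hexp : c0 + (g i₁).mulVec ((fun _ => (1:ℂ)) + z) + (g i₂ - g i₁).mulVec (v2 z)
        + (g i₃ - g i₁).mulVec (v3 z) =
        c0 + ((g i₁).mulVec (fun _ => 1) + (g i₂).mulVec (v2 z) + (g i₃).mulVec (v3 z)) := by
      rw [Matrix.sub_mulVec, Matrix.sub_mulVec, Matrix.mulVec_add, hAz]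
      abel
    show w = ∑ i, (g i).mulVec (t i)
    rw [hsplit, hrest, hs3sum, ← hzeq, hexp]
end
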